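/- arXiv:2007.14512 — 4 statements merged into one kernel-verified Lean document; each statement's English description precedes it below -/
import Mathlib

section
/- Let the simple star network G_J (J an interval of [n]) have weighted path matrix C. Then for all u, w ∈ S_n: if u^{-1}w ∈ S_J then σ_C(x^{u,w}) = q^{cross(π)/2} q^{incross(U(π,u,w))}, where π is the unique path family of type u^{-1}w covering G_J and U(π,u,w) is the one-row π-tableau π_{u_1}⋯π_{u_n}; otherwise σ_C(x^{u,w}) = 0. -/
/- Common combinatorial setup: star networks, covering path families,
   crossing/noncrossing statistics, and the base ring ℤ[q^{1/2},q^{-1/2}]. -/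

open Equiv Finset
open scoped Classical

noncomputable section

/-- The ring `ℤ[q^{1/2}, q^{-1/2}]`, realized as Laurent polynomials in the
variable `q^{1/2}` (so the exponent-`k` monomial is `q^{k/2}`). -/
abbrev R2 : Type := LaurentPolynomial ℤ

/-- `q^{k/2}`. -/
def Qp (k : ℤ) : R2 := LaurentPolynomial.T k

/-- `q`. -/
def qq : R2 := LaurentPolynomial.T 2

/-- Coxeter length of a permutation, i.e. its inversion number. -/
def len {n : ℕ} (w : Perm (Fin n)) : ℕ :=
  ((univ : Finset (Fin n × Fin n)).filter fun p => p.1 < p.2 ∧ w p.2 < w p.1).card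

/-- Membership in the interval `J = [a,b] ⊆ [n]`. -/
def memJ {n : ℕ} (J : Fin n × Fin n) (i : Fin n) : Prop := J.1 ≤ i ∧ i ≤ J.2

/-- Membership in the subgroup `S_J ≤ S_n` generated by the adjacent
transpositions `s_a, …, s_{b-1}` of the interval `J = [a,b]`; equivalently,
the permutations supported on `[a,b]`. -/
def inSJ {n : ℕ} (J : Fin n × Fin n) (w : Perm (Fin n)) : Prop :=
  ∀ i, w i ≠ i → memJ J i

/-- A path family covering the star network `G_{J_1} ∘ ⋯ ∘ G_{J_m}` is
faithfully encoded by the permutation of the wire positions realized at each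
simple-star factor: at factor `p` the paths whose current positions lie in
`J_p` pass through the central vertex and are permuted arbitrarily within
`J_p` (every entering and leaving edge being used exactly once), while all
other paths use their unique horizontal edge.  Thus a covering family is a
sequence `vs` of permutations with `vs p` supported on `J_p`. -/
def IsPathFamily {n m : ℕ} (Js : Fin m → Fin n × Fin n)
    (vs : Fin m → Perm (Fin n)) : Prop :=
  ∀ p, inSJ (Js p) (vs p)

/-- The position of the path starting at source `i` just before factor `k`
(as a permutation of sources). -/
def posAt {n m : ℕ} (vs : Fin m → Perm (Fin n)) (k : ℕ) : Perm (Fin n) :=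
  (((List.ofFn vs).take k).reverse).prod

/-- The type of a covering path family: the path starting at source `i`
terminates at sink `typeOf vs i`. -/
def typeOf {n m : ℕ} (vs : Fin m → Perm (Fin n)) : Perm (Fin n) := posAt vs m

/-- The path from source `i` passes through the central vertex of the factor
`G_{J_p}`. -/
def centeredAt {n m : ℕ} (Js : Fin m → Fin n × Fin n) (vs : Fin m → Perm (Fin n))
    (p : Fin m) (i : Fin n) : Prop :=
  (Js p).1 < (Js p).2 ∧ memJ (Js p) (posAt vs p i)

/-- The paths from sources `i` and `j` both pass through the central vertex of
the factor `G_{J_p}`. -/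
def meetAt {n m : ℕ} (Js : Fin m → Fin n × Fin n) (vs : Fin m → Perm (Fin n))
    (p : Fin m) (i j : Fin n) : Prop :=
  centeredAt Js vs p i ∧ centeredAt Js vs p j

/-- The triple `(π_i, π_j, p)` is a crossing: the two paths intersect at the
central vertex of `G_{J_p}` and cross there. -/
def crossingAt {n m : ℕ} (Js : Fin m → Fin n × Fin n) (vs : Fin m → Perm (Fin n))
    (p : Fin m) (i j : Fin n) : Prop :=
  meetAt Js vs p i j ∧
    ¬ ((posAt vs p i < posAt vs p j) ↔ (posAt vs (p.1 + 1) i < posAt vs (p.1 + 1) j))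

/-- `cross(π)`: the number of crossings of the path family. -/
def crossNum {n m : ℕ} (Js : Fin m → Fin n × Fin n)
    (vs : Fin m → Perm (Fin n)) : ℕ :=
  ((univ : Finset ((Fin n × Fin n) × Fin m)).filter fun x =>
    x.1.1 < x.1.2 ∧ crossingAt Js vs x.2 x.1.1 x.1.2).card

/-- The triple `(π_i, π_j, p)` is a noncrossing with `π_i` entering and
leaving the central vertex of `G_{J_p}` below `π_j`. -/
def noncrossBelow {n m : ℕ} (Js : Fin m → Fin n × Fin n) (vs : Fin m → Perm (Fin n))
    (p : Fin m) (i j : Fin n) : Prop :=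
  meetAt Js vs p i j ∧
    posAt vs p i < posAt vs p j ∧ posAt vs (p.1 + 1) i < posAt vs (p.1 + 1) j

/-- `incross(U)` for a tableau `U` containing the paths of `π`, recorded via
the function `col` assigning to each path (index) the index of the column of
`U` containing it: the number of inverted noncrossings, i.e. noncrossings
`(π_i, π_j, p)` (with `π_i` below `π_j`) such that `π_j` lies in an earlier
column of `U` than `π_i`. -/
def incrossNum {n m : ℕ} (Js : Fin m → Fin n × Fin n) (vs : Fin m → Perm (Fin n))
    (col : Fin n → ℕ) : ℕ :=
  ((univ : Finset ((Fin n × Fin n) × Fin m)).filter fun x =>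
    noncrossBelow Js vs x.2 x.1.1 x.1.2 ∧ col x.1.2 < col x.1.1).card

/-- The number of crossings of the two paths `π_i, π_j` strictly before the
factor `G_{J_p}`. -/
def crossBefore {n m : ℕ} (Js : Fin m → Fin n × Fin n) (vs : Fin m → Perm (Fin n))
    (p : Fin m) (i j : Fin n) : ℕ :=
  ((univ : Finset (Fin m)).filter fun k => k < p ∧ crossingAt Js vs k i j).card

/-- The triple `(π_i, π_j, p)` is defective: the paths meet at the central
vertex of `G_{J_p}` having previously crossed an odd number of times. -/
def defectiveAt {n m : ℕ} (Js : Fin m → Fin n × Fin n) (vs : Fin m → Perm (Fin n))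
    (p : Fin m) (i j : Fin n) : Prop :=
  meetAt Js vs p i j ∧ Odd (crossBefore Js vs p i j)

/-- `dfct(π)`: the number of defective triples of the path family. -/
def dfctNum {n m : ℕ} (Js : Fin m → Fin n × Fin n)
    (vs : Fin m → Perm (Fin n)) : ℕ :=
  ((univ : Finset ((Fin n × Fin n) × Fin m)).filter fun x =>
    x.1.1 < x.1.2 ∧ defectiveAt Js vs x.2 x.1.1 x.1.2).card

/-- `cdncross(W)`: the number of defective noncrossings between pairs of
paths appearing in the same column of the tableau recorded by `col`. -/
def cdncrossNum {n m : ℕ} (Js : Fin m → Fin n × Fin n) (vs : Fin m → Perm (Fin n))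
    (col : Fin n → ℕ) : ℕ :=
  ((univ : Finset ((Fin n × Fin n) × Fin m)).filter fun x =>
    x.1.1 < x.1.2 ∧ defectiveAt Js vs x.2 x.1.1 x.1.2 ∧
      ¬ crossingAt Js vs x.2 x.1.1 x.1.2 ∧ col x.1.1 = col x.1.2).card

/-- The adjacent transposition `s_{i+1}` (0-indexed: swaps positions `i` and
`i+1`). -/
def swp {n : ℕ} (i : ℕ) (h : i + 1 < n) : Perm (Fin n) :=
  Equiv.swap ⟨i, by omega⟩ ⟨i + 1, h⟩

end
/- The weight monomial statistics: the coefficient `[z_G] b_{1,w_1} ⋯ b_{n,w_n}`.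
Expanding the product of path-matrix entries distributively, each term is the
weight word of a choice of a path from source `i` to sink `w i` for each `i`;
the coefficient of the square-free monomial `z_G` vanishes unless the chosen
paths form a covering family, and for a covering family the weight word,
sorted into lexicographic order using the relations
`z_{h_2,p,k} z_{h_1,p,k} = q^{1/2} z_{h_1,p,k} z_{h_2,p,k}` (`h_1 < h_2`),
contributes `q^{inv/2}` where `inv` counts the pairs of variables appearing
out of lexicographic order. -/

noncomputable section
open Equiv Finset
open scoped Classical

/-- The number of out-of-order pairs of variables in the weight word
`wgt(π_1) ⋯ wgt(π_n)` of a covering path family: for sources `i < j`, the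
variables of path `i` precede those of path `j`, and a pair of entering
(resp. leaving) variables at a common factor `p` is out of lexicographic
order exactly when path `j` is below path `i` entering (resp. leaving) the
central vertex of `G_{J_p}`. -/
def wordInv {n m : ℕ} (Js : Fin m → Fin n × Fin n)
    (vs : Fin m → Perm (Fin n)) : ℕ :=
  ((univ : Finset ((Fin n × Fin n) × Fin m × Fin 2)).filter fun x =>
    x.1.1 < x.1.2 ∧ meetAt Js vs x.2.1 x.1.1 x.1.2 ∧
      ((x.2.2 = 0 ∧ posAt vs x.2.1 x.1.2 < posAt vs x.2.1 x.1.1) ∨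
       (x.2.2 = 1 ∧ posAt vs (x.2.1.1 + 1) x.1.2 < posAt vs (x.2.1.1 + 1) x.1.1))).card

/-- `σ_B(x^{e,w}) = [z_G] b_{1,w_1} ⋯ b_{n,w_n}`, where `B` is the weighted
path matrix of the star network `G = G_{J_1} ∘ ⋯ ∘ G_{J_m}`. -/
def zGcoeff {n m : ℕ} (Js : Fin m → Fin n × Fin n) (w : Perm (Fin n)) : R2 :=
  ∑ vs ∈ (univ : Finset (Fin m → Perm (Fin n))).filter
      (fun vs => IsPathFamily Js vs ∧ typeOf vs = w),
    Qp (wordInv Js vs : ℤ)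

end
/- The quantum matrix bialgebra `A_n(q)`, presented as the quotient of the
free `R2`-algebra on the generators `x_{i,j}` by the defining relations. -/

noncomputable section
open Equiv Finset
open scoped Classical

/-- The defining relations of the quantum matrix bialgebra: for `i < j` and
`k < l`,
`x_{i,l} x_{i,k} = q^{1/2} x_{i,k} x_{i,l}`,
`x_{j,k} x_{i,k} = q^{1/2} x_{i,k} x_{j,k}`,
`x_{j,k} x_{i,l} = x_{i,l} x_{j,k}`, and
`x_{j,l} x_{i,k} = x_{i,k} x_{j,l} + (q^{1/2} - q^{-1/2}) x_{i,l} x_{j,k}`. -/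
inductive qmbRel (n : ℕ) :
    FreeAlgebra R2 (Fin n × Fin n) → FreeAlgebra R2 (Fin n × Fin n) → Prop
  | row {i k l : Fin n} (h : k < l) :
      qmbRel n (FreeAlgebra.ι R2 (i, l) * FreeAlgebra.ι R2 (i, k))
        (Qp 1 • (FreeAlgebra.ι R2 (i, k) * FreeAlgebra.ι R2 (i, l)))
  | col {i j k : Fin n} (h : i < j) :
      qmbRel n (FreeAlgebra.ι R2 (j, k) * FreeAlgebra.ι R2 (i, k))
        (Qp 1 • (FreeAlgebra.ι R2 (i, k) * FreeAlgebra.ι R2 (j, k)))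
  | comm {i j k l : Fin n} (hij : i < j) (hkl : k < l) :
      qmbRel n (FreeAlgebra.ι R2 (j, k) * FreeAlgebra.ι R2 (i, l))
        (FreeAlgebra.ι R2 (i, l) * FreeAlgebra.ι R2 (j, k))
  | quasi {i j k l : Fin n} (hij : i < j) (hkl : k < l) :
      qmbRel n (FreeAlgebra.ι R2 (j, l) * FreeAlgebra.ι R2 (i, k))
        (FreeAlgebra.ι R2 (i, k) * FreeAlgebra.ι R2 (j, l) +
          (Qp 1 - Qp (-1)) • (FreeAlgebra.ι R2 (i, l) * FreeAlgebra.ι R2 (j, k)))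

/-- The quantum matrix bialgebra `A_n(q)` (as an `R2`-algebra). -/
abbrev Aq (n : ℕ) : Type := RingQuot (qmbRel n)

/-- The generator `x_{i,j}` of `A_n(q)`. -/
def xv {n : ℕ} (ij : Fin n × Fin n) : Aq n :=
  RingQuot.mkAlgHom R2 (qmbRel n) (FreeAlgebra.ι R2 ij)

/-- The monomial `x^{u,w} = x_{u_1,w_1} x_{u_2,w_2} ⋯ x_{u_n,w_n} ∈ A_n(q)`. -/
def xmon {n : ℕ} (u w : Perm (Fin n)) : Aq n :=
  (List.ofFn fun k : Fin n => xv (u k, w k)).prod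

end
noncomputable section
open Equiv Finset
open scoped Classical

/-! ### Auxiliary development -/

lemma Qp_mul (a b : ℤ) : Qp a * Qp b = Qp (a + b) := (LaurentPolynomial.T_add a b).symm
lemma Qp_zero : Qp 0 = 1 := LaurentPolynomial.T_zero

abbrev Zm (n : ℕ) : Type := Finset (Fin n × Fin 2) → R2

def beta {n : ℕ} (S T : Finset (Fin n × Fin 2)) : ℕ :=
  ((S ×ˢ T).filter fun p => p.1.2 = p.2.2 ∧ p.2.1 < p.1.1).card

lemma beta_empty_left {n : ℕ} (T : Finset (Fin n × Fin 2)) : beta ∅ T = 0 := by simp [beta]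
lemma beta_empty_right {n : ℕ} (S : Finset (Fin n × Fin 2)) : beta S ∅ = 0 := by simp [beta]

lemma beta_union_left {n : ℕ} {S S' : Finset (Fin n × Fin 2)} (h : Disjoint S S')
    (T : Finset (Fin n × Fin 2)) : beta (S ∪ S') T = beta S T + beta S' T := by
  unfold beta
  rw [Finset.union_product, Finset.filter_union]
  exact Finset.card_union_of_disjoint (Finset.disjoint_filter_filter
    (Finset.disjoint_product.mpr (Or.inl h)))

lemma beta_union_right {n : ℕ} {T T' : Finset (Fin n × Fin 2)} (h : Disjoint T T')
    (S : Finset (Fin n × Fin 2)) : beta S (T ∪ T') = beta S T + beta S T' := by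
  unfold beta
  rw [Finset.product_union, Finset.filter_union]
  exact Finset.card_union_of_disjoint (Finset.disjoint_filter_filter
    (Finset.disjoint_product.mpr (Or.inr h)))

/-- Left multiplication by the sorted squarefree monomial with variable set `S`. -/
def opS {n : ℕ} (S : Finset (Fin n × Fin 2)) : Module.End R2 (Zm n) where
  toFun m := fun T => if S ⊆ T then Qp (beta S (T \ S)) * m (T \ S) else 0
  map_add' x y := by funext T; by_cases h : S ⊆ T <;> simp [h, mul_add]
  map_smul' r x := by
    funext T; by_cases h : S ⊆ T <;> simp [h, Pi.smul_apply, smul_eq_mul]; ring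

lemma opS_apply {n : ℕ} (S : Finset (Fin n × Fin 2)) (m : Zm n) (T : Finset (Fin n × Fin 2)) :
    opS S m T = if S ⊆ T then Qp (beta S (T \ S)) * m (T \ S) else 0 := rfl

lemma opS_empty {n : ℕ} : opS (∅ : Finset (Fin n × Fin 2)) = 1 := by
  refine LinearMap.ext fun m => funext fun T => ?_
  simp [opS_apply, beta_empty_left, Qp_zero]

lemma opS_mul {n : ℕ} (S1 S2 : Finset (Fin n × Fin 2)) :
    opS S1 * opS S2 =
      if Disjoint S1 S2 then Qp (beta S1 S2) • opS (S1 ∪ S2) else 0 := by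
  refine LinearMap.ext fun m => funext fun T => ?_
  rw [Module.End.mul_apply, opS_apply]
  by_cases h1 : S1 ⊆ T
  · rw [if_pos h1, opS_apply]
    by_cases h2 : S2 ⊆ T \ S1
    · have hd : Disjoint S1 S2 := (Finset.subset_sdiff.mp h2).2.symm
      have h2T : S2 ⊆ T := h2.trans Finset.sdiff_subset
      rw [if_pos h2, if_pos hd]
      have hU : S1 ∪ S2 ⊆ T := Finset.union_subset h1 h2T
      simp only [LinearMap.smul_apply, Pi.smul_apply, smul_eq_mul, opS_apply, if_pos hU]
      have hTT : (T \ S1) \ S2 = T \ (S1 ∪ S2) := sdiff_sdiff T S1 S2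
      have hsplit : T \ S1 = S2 ∪ (T \ (S1 ∪ S2)) := by
        rw [← hTT]; exact (Finset.union_sdiff_of_subset h2).symm
      have hds : Disjoint S2 (T \ (S1 ∪ S2)) :=
        Finset.disjoint_sdiff.mono_left Finset.subset_union_right
      rw [hTT, hsplit, beta_union_right hds S1, beta_union_left hd]
      push_cast
      rw [← Qp_mul, ← Qp_mul]
      ring
    · rw [if_neg h2]
      by_cases hd : Disjoint S1 S2
      · have hU : ¬ S1 ∪ S2 ⊆ T := by
          intro hU
          exact h2 (Finset.subset_sdiff.mpr ⟨(Finset.union_subset_iff.mp hU).2, hd.symm⟩)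
        simp [hd, opS_apply, hU]
      · simp [hd]
  · rw [if_neg h1]
    by_cases hd : Disjoint S1 S2
    · have hU : ¬ S1 ∪ S2 ⊆ T := fun hU => h1 ((Finset.union_subset_iff.mp hU).1)
      simp [hd, opS_apply, hU]
    · simp [hd]

-- new part
lemma Qp_mul_nat (a b : ℕ) : Qp a * Qp b = Qp ((a + b : ℕ) : ℤ) := by
  rw [Qp_mul]; norm_num

lemma beta_sup {n N : ℕ} (S : Finset (Fin n × Fin 2)) (f : Fin N → Finset (Fin n × Fin 2))
    (s : Finset (Fin N)) (h : ∀ k ∈ s, ∀ k' ∈ s, k ≠ k' → Disjoint (f k) (f k')) :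
    beta S (s.sup f) = ∑ k ∈ s, beta S (f k) := by
  induction s using Finset.cons_induction with
  | empty => simp [beta_empty_right]
  | cons a s ha ih =>
    rw [Finset.sup_cons, Finset.sum_cons]
    have hd : Disjoint (f a) (s.sup f) := by
      rw [Finset.disjoint_sup_right]
      intro i hi
      exact h a (Finset.mem_cons_self a s) i (Finset.mem_cons_of_mem hi)
        (fun he => ha (he ▸ hi))
    rw [sup_eq_union, beta_union_right hd S, ih]
    intro k hk k' hk' hne
    exact h k (Finset.mem_cons_of_mem hk) k' (Finset.mem_cons_of_mem hk') hne

def pairSum {n N : ℕ} (f : Fin N → Finset (Fin n × Fin 2)) : ℕ :=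
  ∑ k : Fin N, ∑ k' : Fin N, if k < k' then beta (f k) (f k') else 0

lemma prod_opS {n N : ℕ} (f : Fin N → Finset (Fin n × Fin 2)) :
    (List.ofFn (fun k => opS (f k))).prod =
      if ∀ k k' : Fin N, k < k' → Disjoint (f k) (f k') then
        Qp (pairSum f) • opS (univ.sup f) else 0 := by
  induction N with
  | zero =>
    simp only [List.ofFn_zero, List.prod_nil]
    rw [if_pos (by intro k; exact absurd k.2 (by omega))]
    simp [pairSum, opS_empty, Qp_zero]
  | succ N ih =>
    rw [List.ofFn_succ, List.prod_cons, ih]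
    by_cases hC : ∀ (k k' : Fin N), k < k' → Disjoint (f k.succ) (f k'.succ)
    · rw [if_pos hC]
      by_cases hD : ∀ k' : Fin N, Disjoint (f 0) (f k'.succ)
      · have hDU : Disjoint (f 0) (univ.sup (fun k : Fin N => f k.succ)) := by
          rw [Finset.disjoint_sup_right]; exact fun i _ => hD i
        have hCC : ∀ (k k' : Fin (N+1)), k < k' → Disjoint (f k) (f k') := by
          intro k k' hlt
          rcases Fin.eq_zero_or_eq_succ k' with rfl | ⟨j, rfl⟩
          · exact absurd hlt (by simp)
          rcases Fin.eq_zero_or_eq_succ k with rfl | ⟨i, rfl⟩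
          · exact hD j
          · exact hC i j (by rwa [Fin.succ_lt_succ_iff] at hlt)
        rw [if_pos hCC]
        rw [mul_smul_comm, opS_mul, if_pos hDU]
        have hsup : (univ.sup f : Finset (Fin n × Fin 2)) =
            f 0 ∪ univ.sup (fun k : Fin N => f k.succ) := by
          rw [Fin.univ_succ, Finset.sup_cons, Finset.sup_map]
          rfl
        rw [smul_smul, Qp_mul_nat, hsup]
        have hb : beta (f 0) (univ.sup fun k : Fin N => f k.succ)
            = ∑ k : Fin N, beta (f 0) (f k.succ) := by
          refine beta_sup _ _ _ ?_
          intro k _ k' _ hne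
          rcases lt_or_gt_of_ne hne with h | h
          · exact hC k k' h
          · exact (hC k' k h).symm
        have e1 : ∑ k' : Fin (N+1), (if (0:Fin (N+1)) < k' then beta (f 0) (f k') else 0)
            = ∑ k : Fin N, beta (f 0) (f k.succ) := by
          rw [Fin.sum_univ_succ]
          simp [Fin.succ_pos]
        have e2 : ∀ i : Fin N, (∑ k' : Fin (N+1), if i.succ < k' then beta (f i.succ) (f k') else 0)
            = ∑ k' : Fin N, if i < k' then beta (f i.succ) (f k'.succ) else 0 := fun i => by
          rw [Fin.sum_univ_succ]
          simp [Fin.succ_lt_succ_iff, (Fin.succ_pos i).not_gt]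
        have hps : pairSum f = pairSum (fun k : Fin N => f k.succ)
            + ∑ k : Fin N, beta (f 0) (f k.succ) := by
          unfold pairSum
          rw [Fin.sum_univ_succ, e1, Finset.sum_congr rfl fun i _ => e2 i]
          exact add_comm _ _
        rw [hb, hps]
      · push_neg at hD
        obtain ⟨j, hj⟩ := hD
        have : ¬ ∀ (k k' : Fin (N+1)), k < k' → Disjoint (f k) (f k') := by
          push_neg
          exact ⟨0, j.succ, Fin.succ_pos j, hj⟩
        rw [if_neg this, mul_smul_comm, opS_mul]
        rw [if_neg (by
          rw [Finset.disjoint_sup_right]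
          push_neg
          exact ⟨j, Finset.mem_univ j, hj⟩)]
        simp
    · rw [if_neg hC, mul_zero, if_neg]
      intro hCC
      exact hC fun k k' h => hCC k.succ k'.succ (by rwa [Fin.succ_lt_succ_iff])

def pairV {n : ℕ} (i j : Fin n) : Finset (Fin n × Fin 2) := {(i,0),(j,1)}

lemma beta_pair_pair {n : ℕ} (p q r s : Fin n) :
    beta (pairV p q) (pairV r s) =
      (if r < p then 1 else 0) + (if s < q then 1 else 0) := by
  have h1 : ((p,(0:Fin 2)) : Fin n × Fin 2) ∉ ({(q,1)} : Finset (Fin n × Fin 2)) := by simp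
  have h2 : ((r,(0:Fin 2)) : Fin n × Fin 2) ∉ ({(s,1)} : Finset (Fin n × Fin 2)) := by simp
  rw [beta, Finset.card_filter]
  rw [Finset.sum_product]
  unfold pairV
  rw [show ({(p,(0:Fin 2)),(q,1)} : Finset (Fin n × Fin 2)) = insert (p,0) {(q,1)} from rfl]
  rw [Finset.sum_insert h1, Finset.sum_singleton]
  rw [show ({(r,(0:Fin 2)),(s,1)} : Finset (Fin n × Fin 2)) = insert (r,0) {(s,1)} from rfl]
  rw [Finset.sum_insert h2, Finset.sum_insert h2, Finset.sum_singleton, Finset.sum_singleton]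
  norm_num

lemma pair_disjoint {n : ℕ} {p q r s : Fin n} (h1 : p ≠ r) (h2 : q ≠ s) :
    Disjoint (pairV p q) (pairV r s) := by
  simp only [pairV, Finset.disjoint_left, Finset.mem_insert, Finset.mem_singleton]
  rintro x (rfl | rfl) (h | h) <;> simp_all [Prod.ext_iff]

lemma pair_not_disjoint_left {n : ℕ} (p q s : Fin n) :
    ¬ Disjoint (pairV p q) (pairV p s) :=
  Finset.not_disjoint_iff.mpr ⟨(p,0), by simp [pairV], by simp [pairV]⟩

lemma pair_not_disjoint_right {n : ℕ} (p q r : Fin n) :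
    ¬ Disjoint (pairV p q) (pairV r q) :=
  Finset.not_disjoint_iff.mpr ⟨(q,1), by simp [pairV], by simp [pairV]⟩

lemma pair_union_comm' {n : ℕ} (i j k l : Fin n) :
    pairV i l ∪ pairV j k = pairV j l ∪ pairV i k := by
  ext x
  simp [pairV]
  tauto

lemma memJ_between {n : ℕ} {J : Fin n × Fin n} {x y z : Fin n}
    (h1 : memJ J x) (h2 : memJ J z) (hxy : x ≤ y) (hyz : y ≤ z) : memJ J y :=
  ⟨h1.1.trans hxy, hyz.trans h2.2⟩

def opC {n : ℕ} (J : Fin n × Fin n) (i j : Fin n) : Module.End R2 (Zm n) :=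
  if memJ J i ∧ memJ J j then opS (pairV i j) else if i = j then 1 else 0

lemma opC_of_mem {n : ℕ} {J : Fin n × Fin n} {i j : Fin n} (h : memJ J i ∧ memJ J j) :
    opC J i j = opS (pairV i j) := if_pos h

lemma opC_of_eq {n : ℕ} {J : Fin n × Fin n} {i j : Fin n} (h : ¬(memJ J i ∧ memJ J j))
    (he : i = j) : opC J i j = 1 := by rw [opC, if_neg h, if_pos he]

lemma opC_of_ne {n : ℕ} {J : Fin n × Fin n} {i j : Fin n} (h : ¬(memJ J i ∧ memJ J j))
    (hne : i ≠ j) : opC J i j = 0 := by rw [opC, if_neg h, if_neg hne]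

lemma opS_mul_nd {n : ℕ} {S1 S2 : Finset (Fin n × Fin 2)} (h : ¬ Disjoint S1 S2) :
    opS S1 * opS S2 = 0 := by rw [opS_mul, if_neg h]

lemma opS_pair_mul {n : ℕ} {p q r s : Fin n} (h1 : p ≠ r) (h2 : q ≠ s) :
    opS (pairV p q) * opS (pairV r s) =
      Qp (((if r < p then 1 else 0) + (if s < q then 1 else 0) : ℕ) : ℤ) •
        opS (pairV p q ∪ pairV r s) := by
  rw [opS_mul, if_pos (pair_disjoint h1 h2), beta_pair_pair]

section Rel
variable {n : ℕ} {J : Fin n × Fin n}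

lemma opC_row {i k l : Fin n} (h : k < l) :
    opC J i l * opC J i k = Qp 1 • (opC J i k * opC J i l) := by
  by_cases hA : memJ J i ∧ memJ J l <;> by_cases hB : memJ J i ∧ memJ J k
  · rw [opC_of_mem hA, opC_of_mem hB,
      opS_mul_nd (pair_not_disjoint_left i l k), opS_mul_nd (pair_not_disjoint_left i k l)]
    simp
  · have hik : i ≠ k := fun he => hB ⟨hA.1, he ▸ hA.1⟩
    rw [opC_of_ne hB hik]
    simp
  · have hil : i ≠ l := fun he => hA ⟨hB.1, he ▸ hB.1⟩
    rw [opC_of_ne hA hil]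
    simp
  · by_cases hil : i = l
    · have hik : i ≠ k := fun he => h.ne (he.symm.trans hil)
      rw [opC_of_ne hB hik]
      simp
    · rw [opC_of_ne hA hil]
      simp

lemma opC_col {i j k : Fin n} (h : i < j) :
    opC J j k * opC J i k = Qp 1 • (opC J i k * opC J j k) := by
  by_cases hA : memJ J j ∧ memJ J k <;> by_cases hB : memJ J i ∧ memJ J k
  · rw [opC_of_mem hA, opC_of_mem hB,
      opS_mul_nd (pair_not_disjoint_right j k i), opS_mul_nd (pair_not_disjoint_right i k j)]
    simp
  · have hik : i ≠ k := fun he => hB ⟨he ▸ hA.2, hA.2⟩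
    rw [opC_of_ne hB hik]
    simp
  · have hjk : j ≠ k := fun he => hA ⟨he ▸ hB.2, hB.2⟩
    rw [opC_of_ne hA hjk]
    simp
  · by_cases hjk : j = k
    · have hik : i ≠ k := fun he => h.ne (hjk ▸ he)
      rw [opC_of_ne hB hik]
      simp
    · rw [opC_of_ne hA hjk]
      simp

lemma opC_comm {i j k l : Fin n} (hij : i < j) (hkl : k < l) :
    opC J j k * opC J i l = opC J i l * opC J j k := by
  by_cases hA : memJ J j ∧ memJ J k <;> by_cases hB : memJ J i ∧ memJ J l
  · rw [opC_of_mem hA, opC_of_mem hB, opS_pair_mul hij.ne' hkl.ne,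
      opS_pair_mul hij.ne hkl.ne', Finset.union_comm]
    rw [if_pos hij, if_neg (asymm hkl), if_neg (asymm hij), if_pos hkl]
  · by_cases hil : i = l
    · rw [opC_of_eq hB hil, one_mul, mul_one]
    · rw [opC_of_ne hB hil, mul_zero, zero_mul]
  · by_cases hjk : j = k
    · rw [opC_of_eq hA hjk, one_mul, mul_one]
    · rw [opC_of_ne hA hjk, mul_zero, zero_mul]
  · by_cases hjk : j = k
    · rw [opC_of_eq hA hjk, one_mul, mul_one]
    · rw [opC_of_ne hA hjk, mul_zero, zero_mul]

lemma opC_quasi {i j k l : Fin n} (hij : i < j) (hkl : k < l) :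
    opC J j l * opC J i k =
      opC J i k * opC J j l + (Qp 1 - Qp (-1)) • (opC J i l * opC J j k) := by
  by_cases hA : memJ J j ∧ memJ J l <;> by_cases hB : memJ J i ∧ memJ J k
  · -- all four in J
    have hC : memJ J i ∧ memJ J l := ⟨hB.1, hA.2⟩
    have hD : memJ J j ∧ memJ J k := ⟨hA.1, hB.2⟩
    rw [opC_of_mem hA, opC_of_mem hB, opC_of_mem hC, opC_of_mem hD,
      opS_pair_mul hij.ne' hkl.ne', opS_pair_mul hij.ne hkl.ne,
      opS_pair_mul hij.ne hkl.ne']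
    rw [if_pos hij, if_pos hkl, if_neg (asymm hij), if_neg (asymm hkl)]
    rw [Finset.union_comm (pairV i k), pair_union_comm' i j k l]
    rw [smul_smul, ← add_smul]
    congr 1
    have e1 : Qp ((1 + 1 : ℕ) : ℤ) = Qp 2 := by norm_num
    have e2 : Qp ((0 + 0 : ℕ) : ℤ) = 1 := by norm_num [Qp_zero]
    have e3 : Qp ((0 + 1 : ℕ) : ℤ) = Qp 1 := by norm_num
    rw [e1, e2, e3, sub_mul, Qp_mul, Qp_mul]
    norm_num [Qp_zero]
  · -- A, not B
    by_cases hik : i = k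
    · have hmi : ¬ memJ J i := fun h => hB ⟨h, hik ▸ h⟩
      have h1 : opC J i k = 1 := opC_of_eq hB hik
      have h2 : opC J i l = 0 :=
        opC_of_ne (fun h => hmi h.1) (fun he => (hik ▸ hkl).ne (he ▸ rfl))
      have h3 : opC J j k = 0 :=
        opC_of_ne (fun h => hmi (hik ▸ h.2)) (fun he => (hik ▸ hij).ne (he.symm))
      rw [h1, h2, h3]
      simp
    · rw [opC_of_ne hB hik]
      rcases not_and_or.mp hB with hmi | hmk
      · have h2 : opC J i l = 0 :=
          opC_of_ne (fun h => hmi h.1) (fun he => hmi (he ▸ hA.2))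
        rw [h2]
        simp
      · have h3 : opC J j k = 0 :=
          opC_of_ne (fun h => hmk h.2) (fun he => hmk (he ▸ hA.1))
        rw [h3]
        simp
  · -- not A, B
    by_cases hjl : j = l
    · have hmj : ¬ memJ J j := fun h => hA ⟨h, hjl ▸ h⟩
      have h1 : opC J j l = 1 := opC_of_eq hA hjl
      have h2 : opC J i l = 0 :=
        opC_of_ne (fun h => hmj (hjl ▸ h.2)) (fun he => (hjl ▸ hij).ne he)
      rw [h1, h2]
      simp
    · rw [opC_of_ne hA hjl]
      rcases not_and_or.mp hA with hmj | hml
      · have hjk : j ≠ k := fun he => hmj (he ▸ hB.2)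
        have h3 : opC J j k = 0 := opC_of_ne (fun h => hmj h.1) hjk
        rw [h3]
        simp
      · by_cases hil : i = l
        · -- interval case: k < l = i < j, memJ i, memJ k → memJ between gives memJ l? 
          -- here memJ i and i = l gives memJ l, contradiction with hml
          exact absurd (hil ▸ hB.1) hml
        · have h2 : opC J i l = 0 := opC_of_ne (fun h => hml h.2) hil
          rw [h2]
          simp
  · -- neither
    by_cases hjl : j = l
    · have h1 : opC J j l = 1 := opC_of_eq hA hjl
      have h2 : opC J i l = 0 := by
        refine opC_of_ne (fun h => hA ⟨?_, h.2⟩) (fun he => (hjl ▸ hij).ne he)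
        exact hjl ▸ h.2
      rw [h1, h2]
      simp
    · rw [opC_of_ne hA hjl]
      rcases not_and_or.mp hA with hmj | hml
      · by_cases hjk : j = k
        · have h1 : opC J j k = 1 := opC_of_eq (fun h => hmj h.1) hjk
          have h2 : opC J i l = 0 := by
            refine opC_of_ne (fun h => hmj ?_) (hij.trans (hjk.symm ▸ hkl)).ne
            exact memJ_between h.1 h.2 hij.le (hjk.symm ▸ hkl).le
          rw [h1, h2]
          simp
        · have h3 : opC J j k = 0 := opC_of_ne (fun h => hmj h.1) hjk
          rw [h3]
          simp
      · by_cases hil : i = l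
        · have h1 : opC J i l = 1 := opC_of_eq (fun h => hml h.2) hil
          have h3 : opC J j k = 0 := by
            refine opC_of_ne (fun h => hml ?_) (hkl.trans (hil ▸ hij)).ne'
            exact memJ_between h.2 h.1 hkl.le (hil ▸ hij).le
          rw [h1, h3]
          simp
        · have h2 : opC J i l = 0 := opC_of_ne (fun h => hml h.2) hil
          rw [h2]
          simp
end Rel


def SkF {n : ℕ} (J : Fin n × Fin n) (u w : Perm (Fin n)) (k : Fin n) :
    Finset (Fin n × Fin 2) := if memJ J (u k) then pairV (u k) (w k) else ∅


lemma posAt_zero {n m : ℕ} (vs : Fin m → Perm (Fin n)) : posAt vs 0 = 1 := by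
  simp [posAt]

lemma posAt_one {n : ℕ} (vs : Fin 1 → Perm (Fin n)) : posAt vs 1 = vs 0 := by
  simp [posAt, List.ofFn_succ]

-- canonical form for wordInv over a single star
lemma wordInv_eq {n : ℕ} (J : Fin n × Fin n) (v : Perm (Fin n)) :
    wordInv (fun _ : Fin 1 => J) (fun _ : Fin 1 => v)
      = ∑ i : Fin n, ∑ j : Fin n,
          if i < j ∧ memJ J i ∧ memJ J j ∧ v j < v i then 1 else 0 := by
  rw [wordInv, Finset.card_filter]
  rw [Fintype.sum_prod_type, Fintype.sum_prod_type]
  refine Finset.sum_congr rfl fun i _ => ?_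
  refine Finset.sum_congr rfl fun j _ => ?_
  rw [Fintype.sum_prod_type, Fin.sum_univ_one, Fin.sum_univ_two]
  simp only [meetAt, centeredAt, posAt_zero, posAt_one, Fin.isValue, Fin.val_zero,
    Perm.one_apply, zero_add, posAt_one]
  have h01 : ¬((0:Fin 2) = 1) := by decide
  have h10 : ¬((1:Fin 2) = 0) := by decide
  simp only [h01, h10, false_and, false_or, or_false, true_and, and_true]
  simp only [memJ, Fin.lt_def, Fin.le_def]
  split_ifs <;> omega

lemma crossNum_eq {n : ℕ} (J : Fin n × Fin n) (σ : Perm (Fin n)) :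
    crossNum (fun _ : Fin 1 => J) (fun _ : Fin 1 => σ)
      = ∑ i : Fin n, ∑ j : Fin n,
          if i < j ∧ memJ J i ∧ memJ J j ∧ σ j < σ i then 1 else 0 := by
  rw [crossNum, Finset.card_filter, Fintype.sum_prod_type, Fintype.sum_prod_type]
  refine Finset.sum_congr rfl fun i _ => ?_
  refine Finset.sum_congr rfl fun j _ => ?_
  rw [Fin.sum_univ_one]
  simp only [crossingAt, meetAt, centeredAt, posAt_zero, posAt_one, Fin.isValue,
    Fin.val_zero, zero_add, Perm.one_apply]
  by_cases hij : i = j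
  · subst hij; simp [lt_irrefl]
  · have h1 : (i : ℕ) ≠ (j : ℕ) := fun h => hij (Fin.val_injective h)
    have h2 : ((σ i : Fin n) : ℕ) ≠ ((σ j : Fin n) : ℕ) :=
      fun h => hij (σ.injective (Fin.val_injective h))
    simp only [memJ, Fin.lt_def, Fin.le_def, iff_iff_implies_and_implies]
    split_ifs <;> omega

lemma incrossNum_eq {n : ℕ} (J : Fin n × Fin n) (σ : Perm (Fin n)) (uinv : Fin n → Fin n) :
    incrossNum (fun _ : Fin 1 => J) (fun _ : Fin 1 => σ) (fun i => ((uinv i : Fin n) : ℕ))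
      = ∑ i : Fin n, ∑ j : Fin n,
          if i < j ∧ memJ J i ∧ memJ J j ∧ σ i < σ j ∧ uinv j < uinv i then 1 else 0 := by
  rw [incrossNum, Finset.card_filter, Fintype.sum_prod_type, Fintype.sum_prod_type]
  refine Finset.sum_congr rfl fun i _ => ?_
  refine Finset.sum_congr rfl fun j _ => ?_
  rw [Fin.sum_univ_one]
  simp only [noncrossBelow, meetAt, centeredAt, posAt_zero, posAt_one, Fin.isValue,
    Fin.val_zero, zero_add, Perm.one_apply]
  simp only [memJ, Fin.lt_def, Fin.le_def]
  split_ifs <;> omega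

lemma pairSum_eq {n : ℕ} (J : Fin n × Fin n) (u w : Perm (Fin n)) :
    pairSum (SkF J u w)
      = ∑ k : Fin n, ∑ k' : Fin n,
          ((if k < k' ∧ memJ J (u k) ∧ memJ J (u k') ∧ u k' < u k then 1 else 0)
            + (if k < k' ∧ memJ J (u k) ∧ memJ J (u k') ∧ w k' < w k then 1 else 0)) := by
  unfold pairSum
  refine Finset.sum_congr rfl fun k _ => ?_
  refine Finset.sum_congr rfl fun k' _ => ?_
  by_cases hk : memJ J (u k) <;> by_cases hk' : memJ J (u k') <;>
    simp only [SkF, hk, hk', if_true, if_false, beta_pair_pair, beta_empty_left,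
      beta_empty_right, true_and, and_true, false_and, and_false, if_false] <;>
    · simp only [memJ, Fin.lt_def, Fin.le_def] at *
      split_ifs <;> omega

lemma identity1 {n : ℕ} (J : Fin n × Fin n) (v : Perm (Fin n)) :
    pairSum (SkF J 1 v) = wordInv (fun _ : Fin 1 => J) (fun _ : Fin 1 => v) := by
  rw [pairSum_eq, wordInv_eq]
  refine Finset.sum_congr rfl fun i _ => ?_
  refine Finset.sum_congr rfl fun j _ => ?_
  simp only [Perm.one_apply]
  simp only [memJ, Fin.lt_def, Fin.le_def]
  split_ifs <;> omega

set_option maxHeartbeats 2000000 in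
lemma identity2 {n : ℕ} (J : Fin n × Fin n) (u w : Perm (Fin n)) :
    pairSum (SkF J u w) =
      crossNum (fun _ : Fin 1 => J) (fun _ : Fin 1 => w * u⁻¹) +
        2 * incrossNum (fun _ : Fin 1 => J) (fun _ : Fin 1 => w * u⁻¹)
          (fun i => ((u⁻¹ i : Fin n) : ℕ)) := by
  rw [pairSum_eq, crossNum_eq, incrossNum_eq J (w * u⁻¹) (fun i => u⁻¹ i)]
  set σ := w * u⁻¹ with hσ
  -- G i j : contribution after reindexing by u
  set G : Fin n → Fin n → ℕ := fun i j =>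
    (if u⁻¹ i < u⁻¹ j ∧ memJ J i ∧ memJ J j ∧ j < i then 1 else 0)
      + (if u⁻¹ i < u⁻¹ j ∧ memJ J i ∧ memJ J j ∧ σ j < σ i then 1 else 0) with hG
  have step1 : (∑ k : Fin n, ∑ k' : Fin n,
      ((if k < k' ∧ memJ J (u k) ∧ memJ J (u k') ∧ u k' < u k then 1 else 0)
        + (if k < k' ∧ memJ J (u k) ∧ memJ J (u k') ∧ w k' < w k then 1 else 0)))
      = ∑ i : Fin n, ∑ j : Fin n, G i j := by
    have hterm : ∀ k k' : Fin n,
        ((if k < k' ∧ memJ J (u k) ∧ memJ J (u k') ∧ u k' < u k then 1 else 0)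
          + (if k < k' ∧ memJ J (u k) ∧ memJ J (u k') ∧ w k' < w k then (1:ℕ) else 0))
        = G (u k) (u k') := by
      intro k k'
      rw [hG]
      simp only [Perm.coe_inv, Equiv.symm_apply_apply, hσ, Perm.mul_apply]
    calc (∑ k : Fin n, ∑ k' : Fin n,
        ((if k < k' ∧ memJ J (u k) ∧ memJ J (u k') ∧ u k' < u k then 1 else 0)
          + (if k < k' ∧ memJ J (u k) ∧ memJ J (u k') ∧ w k' < w k then 1 else 0)))
        = ∑ k : Fin n, ∑ k' : Fin n, G (u k) (u k') := by
          refine Finset.sum_congr rfl fun k _ => Finset.sum_congr rfl fun k' _ => hterm k k'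
      _ = ∑ k : Fin n, ∑ j : Fin n, G (u k) j := by
          refine Finset.sum_congr rfl fun k _ => ?_
          exact Equiv.sum_comp u (fun j => G (u k) j)
      _ = ∑ i : Fin n, ∑ j : Fin n, G i j := Equiv.sum_comp u (fun i => ∑ j : Fin n, G i j)
  rw [step1]
  -- symmetrization
  set R : Fin n → Fin n → ℕ := fun i j =>
    (if i < j ∧ memJ J i ∧ memJ J j ∧ σ j < σ i then 1 else 0)
      + 2 * (if i < j ∧ memJ J i ∧ memJ J j ∧ σ i < σ j ∧ u⁻¹ j < u⁻¹ i then 1 else 0)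
    with hR
  have hpoint : ∀ i j : Fin n, G i j + G j i = R i j + R j i := by
    intro i j
    rw [hG, hR]
    by_cases hij : i = j
    · subst hij
      simp [lt_self_iff_false]
    · have e1 : (i : ℕ) ≠ (j : ℕ) := fun h => hij (Fin.val_injective h)
      have e2 : ((σ i : Fin n) : ℕ) ≠ ((σ j : Fin n) : ℕ) :=
        fun h => hij (σ.injective (Fin.val_injective h))
      have e3 : ((u⁻¹ i : Fin n) : ℕ) ≠ ((u⁻¹ j : Fin n) : ℕ) :=
        fun h => hij ((u⁻¹).injective (Fin.val_injective h))
      simp only [memJ, Fin.lt_def, Fin.le_def]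
      split_ifs <;> omega
  have key : 2 * (∑ i : Fin n, ∑ j : Fin n, G i j)
      = 2 * (∑ i : Fin n, ∑ j : Fin n, R i j) := by
    have hswap : ∀ (H : Fin n → Fin n → ℕ), (∑ i : Fin n, ∑ j : Fin n, H i j)
        = ∑ i : Fin n, ∑ j : Fin n, H j i := fun H => Finset.sum_comm
    have l1 : 2 * (∑ i : Fin n, ∑ j : Fin n, G i j)
        = ∑ i : Fin n, ∑ j : Fin n, (G i j + G j i) := by
      rw [two_mul]
      nth_rewrite 2 [hswap G]
      rw [← Finset.sum_add_distrib]
      refine Finset.sum_congr rfl fun i _ => ?_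
      rw [← Finset.sum_add_distrib]
    have l2 : 2 * (∑ i : Fin n, ∑ j : Fin n, R i j)
        = ∑ i : Fin n, ∑ j : Fin n, (R i j + R j i) := by
      rw [two_mul]
      nth_rewrite 2 [hswap R]
      rw [← Finset.sum_add_distrib]
      refine Finset.sum_congr rfl fun i _ => ?_
      rw [← Finset.sum_add_distrib]
    rw [l1, l2]
    exact Finset.sum_congr rfl fun i _ => Finset.sum_congr rfl fun j _ => hpoint i j
  have := Nat.eq_of_mul_eq_mul_left (by norm_num : 0 < 2) key
  rw [this, hR]
  rw [Finset.mul_sum]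
  rw [← Finset.sum_add_distrib]
  refine Finset.sum_congr rfl fun i _ => ?_
  rw [Finset.mul_sum, ← Finset.sum_add_distrib]


lemma inSJ_maps {n : ℕ} {J : Fin n × Fin n} {σ : Perm (Fin n)} (hs : inSJ J σ)
    {i : Fin n} (hi : memJ J i) : memJ J (σ i) := by
  by_cases h : σ (σ i) = σ i
  · rwa [σ.injective h]
  · exact hs _ h

lemma inSJ_inv {n : ℕ} {J : Fin n × Fin n} {σ : Perm (Fin n)} (hs : inSJ J σ) :
    inSJ J σ⁻¹ := by
  intro i hi
  have h2 : σ (σ⁻¹ i) ≠ σ⁻¹ i := by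
    rw [Perm.coe_inv, Equiv.apply_symm_apply]
    exact fun he => hi he.symm
  have h3 : memJ J (σ (σ⁻¹ i)) := inSJ_maps hs (hs _ h2)
  rwa [Perm.coe_inv, Equiv.apply_symm_apply] at h3

def delta0 {n : ℕ} : Zm n := fun T => if T = ∅ then 1 else 0

def SGset {n : ℕ} (J : Fin n × Fin n) : Finset (Fin n × Fin 2) :=
  univ.filter fun v => memJ J v.1

def Phi {n : ℕ} (J : Fin n × Fin n) : Aq n →ₐ[R2] Module.End R2 (Zm n) :=
  RingQuot.liftAlgHom R2 ⟨FreeAlgebra.lift R2 fun ij => opC J ij.1 ij.2, by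
    intro a b h
    cases h with
    | @row i k l hkl =>
      simp only [map_mul, map_smul, FreeAlgebra.lift_ι_apply]
      exact opC_row hkl
    | @col i j k hij =>
      simp only [map_mul, map_smul, FreeAlgebra.lift_ι_apply]
      exact opC_col hij
    | @comm i j k l hij hkl =>
      simp only [map_mul, FreeAlgebra.lift_ι_apply]
      exact opC_comm hij hkl
    | @quasi i j k l hij hkl =>
      simp only [map_mul, map_add, map_smul, FreeAlgebra.lift_ι_apply]
      exact opC_quasi hij hkl⟩

lemma Phi_xv {n : ℕ} (J : Fin n × Fin n) (ij : Fin n × Fin n) :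
    Phi J (xv ij) = opC J ij.1 ij.2 := by
  rw [Phi, xv, RingQuot.liftAlgHom_mkAlgHom_apply, FreeAlgebra.lift_ι_apply]

lemma Phi_xmon {n : ℕ} (J : Fin n × Fin n) (u w : Perm (Fin n)) :
    Phi J (xmon u w) = (List.ofFn fun k => opC J (u k) (w k)).prod := by
  rw [xmon, map_list_prod, List.map_ofFn]
  exact congrArg List.prod (congrArg List.ofFn (funext fun k => Phi_xv J (u k, w k)))

def Fval {n : ℕ} (J : Fin n × Fin n) (x : Aq n) : R2 := Phi J x delta0 (SGset J)

lemma F_xmon {n : ℕ} (J : Fin n × Fin n) (u w : Perm (Fin n)) :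
    Fval J (xmon u w) =
      if inSJ J (w * u⁻¹) then Qp (pairSum (SkF J u w)) else 0 := by
  by_cases hs : inSJ J (w * u⁻¹)
  · rw [if_pos hs]
    have hw' : ∀ k, memJ J (u k) → memJ J (w k) := by
      intro k hm
      have h1 := inSJ_maps hs hm
      rwa [Perm.mul_apply, Perm.coe_inv, Equiv.symm_apply_apply] at h1
    have hopc : (fun k : Fin n => opC J (u k) (w k)) = fun k => opS (SkF J u w k) := by
      funext k
      by_cases hm : memJ J (u k)
      · rw [SkF, if_pos hm, opC_of_mem ⟨hm, hw' k hm⟩]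
      · have hfix : u k = w k := by
          by_contra hne
          refine hm (hs _ ?_)
          rw [Perm.mul_apply, Perm.coe_inv, Equiv.symm_apply_apply]
          exact fun h => hne h.symm
        rw [SkF, if_neg hm, opC_of_eq (fun h => hm h.1) hfix, opS_empty]
    rw [Fval, Phi_xmon, hopc]
    have hdisj : ∀ k k' : Fin n, k < k' → Disjoint (SkF J u w k) (SkF J u w k') := by
      intro k k' hlt
      by_cases h1 : memJ J (u k) <;> by_cases h2 : memJ J (u k') <;>
        simp only [SkF, h1, h2, if_true, if_false]
      · exact pair_disjoint (fun he => hlt.ne (u.injective he))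
          (fun he => hlt.ne (w.injective he))
      · exact Finset.disjoint_empty_right _
      · exact Finset.disjoint_empty_left _
      · exact Finset.disjoint_empty_left _
    rw [prod_opS, if_pos hdisj]
    have hsup : univ.sup (SkF J u w) = SGset J := by
      apply Finset.Subset.antisymm
      · intro x hx
        rw [Finset.mem_sup] at hx
        obtain ⟨k, -, hxk⟩ := hx
        rw [SGset, Finset.mem_filter]
        refine ⟨Finset.mem_univ x, ?_⟩
        unfold SkF at hxk
        split_ifs at hxk with hm
        · rcases Finset.mem_insert.mp hxk with rfl | hxk2
          · exact hm
          · rw [Finset.mem_singleton] at hxk2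
            subst hxk2
            exact hw' k hm
        · simp at hxk
      · intro x hx
        rw [SGset, Finset.mem_filter] at hx
        rw [Finset.mem_sup]
        obtain ⟨h, c⟩ := x
        have hx1 : memJ J h := hx.2
        have hc : c = 0 ∨ c = 1 := by omega
        rcases hc with rfl | rfl
        · refine ⟨u⁻¹ h, Finset.mem_univ _, ?_⟩
          have hm : memJ J (u (u⁻¹ h)) := by rwa [Perm.coe_inv, Equiv.apply_symm_apply]
          rw [SkF, if_pos hm, pairV]
          exact Finset.mem_insert.mpr (Or.inl (by rw [Perm.coe_inv, Equiv.apply_symm_apply]))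
        · refine ⟨w⁻¹ h, Finset.mem_univ _, ?_⟩
          have hm : memJ J (u (w⁻¹ h)) := by
            have h1 : memJ J ((w * u⁻¹)⁻¹ h) := inSJ_maps (inSJ_inv hs) hx1
            rwa [mul_inv_rev, inv_inv, Perm.mul_apply] at h1
          rw [SkF, if_pos hm, pairV]
          refine Finset.mem_insert.mpr (Or.inr ?_)
          rw [Finset.mem_singleton, Perm.coe_inv, Equiv.apply_symm_apply]
    rw [hsup]
    rw [LinearMap.smul_apply, Pi.smul_apply, smul_eq_mul, opS_apply,
      if_pos (Finset.Subset.refl _), Finset.sdiff_self, beta_empty_right]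
    simp [delta0, Qp_zero]
  · rw [if_neg hs]
    rw [inSJ] at hs
    push_neg at hs
    obtain ⟨i, h1, h2⟩ := hs
    have hzero : opC J (u (u⁻¹ i)) (w (u⁻¹ i)) = 0 := by
      rw [Perm.coe_inv, Equiv.apply_symm_apply]
      refine opC_of_ne (fun h => h2 h.1) ?_
      intro he
      refine absurd ?_ h1
      rw [Perm.mul_apply]
      exact he.symm
    have hz : (List.ofFn fun k => opC J (u k) (w k)).prod = 0 :=
      List.prod_eq_zero ((List.mem_ofFn).mpr ⟨u⁻¹ i, hzero.symm ▸ rfl⟩)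
    rw [Fval, Phi_xmon, hz]
    simp

lemma zGcoeff_eq {n : ℕ} (J : Fin n × Fin n) (v : Perm (Fin n)) :
    zGcoeff (fun _ : Fin 1 => J) v =
      if inSJ J v then Qp (wordInv (fun _ : Fin 1 => J) (fun _ : Fin 1 => v)) else 0 := by
  have htype : ∀ vs : Fin 1 → Perm (Fin n), typeOf vs = vs 0 := by
    intro vs
    rw [typeOf, posAt]
    simp [List.ofFn_succ]
  rw [zGcoeff]
  by_cases hs : inSJ J v
  · rw [if_pos hs]
    have hset : (univ : Finset (Fin 1 → Perm (Fin n))).filter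
        (fun vs => IsPathFamily (fun _ : Fin 1 => J) vs ∧ typeOf vs = v)
        = {fun _ => v} := by
      ext vs
      simp only [Finset.mem_filter, Finset.mem_univ, true_and, Finset.mem_singleton]
      constructor
      · rintro ⟨hpf, ht⟩
        funext p
        have hp : p = 0 := Subsingleton.elim p 0
        rw [hp, ← htype vs, ht]
      · rintro rfl
        exact ⟨fun p => hs, htype _⟩
    rw [hset, Finset.sum_singleton]
  · rw [if_neg hs]
    have hset : (univ : Finset (Fin 1 → Perm (Fin n))).filter
        (fun vs => IsPathFamily (fun _ : Fin 1 => J) vs ∧ typeOf vs = v)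
        = ∅ := by
      ext vs
      simp only [Finset.mem_filter, Finset.mem_univ, true_and, Finset.notMem_empty,
        iff_false, not_and]
      intro hpf ht
      have hv : vs 0 = v := (htype vs).symm.trans ht
      exact hs (hv ▸ hpf 0)
    rw [hset, Finset.sum_empty]

/-- Lemma 3.2 / `l:sigmareversalinterp`.  Let the simple
star network `G_J` have weighted path matrix `C`.  For `u, w ∈ S_n`: if
`u⁻¹w ∈ S_J` then `σ_C(x^{u,w}) = q^{cross(π)/2} q^{incross(U(π,u,w))}`,
where `π` is the unique path family of type `u⁻¹w` covering `G_J` (encoded by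
the single permutation `w ∘ u⁻¹` supported on `J`) and `U(π,u,w)` is the
one-row `π`-tableau `π_{u_1} ⋯ π_{u_n}` (so the column of `π_i` is `u⁻¹(i)`);
otherwise `σ_C(x^{u,w}) = 0`.  Here `σ_C(x^{u,w})` is evaluated by expanding
`x^{u,w}` in the basis `{x^{e,v}}` of the immanant space of `A_n(q)` (the
unique coefficients `c`) and applying `x^{e,v} ↦ [z_G] c_{1,v_1} ⋯ c_{n,v_n}`. -/
theorem sigma_simple_star_interpretation
    {n : ℕ} (J : Fin n × Fin n) (hJ : J.1 ≤ J.2)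
    (u w : Perm (Fin n)) (c : Perm (Fin n) → R2)
    (hc : xmon u w = ∑ v : Perm (Fin n), c v • xmon 1 v) :
    (inSJ J (w * u⁻¹) →
      ∑ v : Perm (Fin n), c v * zGcoeff (fun _ : Fin 1 => J) v =
        Qp ((crossNum (fun _ : Fin 1 => J) (fun _ : Fin 1 => w * u⁻¹) +
          2 * incrossNum (fun _ : Fin 1 => J) (fun _ : Fin 1 => w * u⁻¹)
            (fun i => ((u⁻¹ i : Fin n) : ℕ)) : ℕ) : ℤ)) ∧
    (¬ inSJ J (w * u⁻¹) →
      ∑ v : Perm (Fin n), c v * zGcoeff (fun _ : Fin 1 => J) v = 0) := by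
  have h1 : ∀ v : Perm (Fin n), zGcoeff (fun _ : Fin 1 => J) v = Fval J (xmon 1 v) := by
    intro v
    rw [zGcoeff_eq, F_xmon]
    rw [inv_one, mul_one]
    by_cases hs : inSJ J v
    · rw [if_pos hs, if_pos hs, ← identity1]
    · rw [if_neg hs, if_neg hs]
  have h2 : Fval J (xmon u w) = ∑ v : Perm (Fin n), c v * Fval J (xmon 1 v) := by
    rw [Fval, hc, map_sum]
    rw [LinearMap.sum_apply, Finset.sum_apply]
    refine Finset.sum_congr rfl fun v _ => ?_
    rw [map_smul, LinearMap.smul_apply, Pi.smul_apply, smul_eq_mul]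
    rfl
  have hF : ∑ v : Perm (Fin n), c v * zGcoeff (fun _ : Fin 1 => J) v = Fval J (xmon u w) := by
    rw [h2]
    exact Finset.sum_congr rfl fun v _ => by rw [h1 v]
  constructor
  · intro hs
    rw [hF, F_xmon, if_pos hs, identity2]
  · intro hs
    rw [hF, F_xmon, if_neg hs]

end
end

section
/- Let the simple star network G_J (J an interval of [n]) have weighted path matrix C, and let u, w ∈ S_n have the unique factorizations u = u_-u^*, w = w_-w^* with u_-, w_- minimum-length left coset representatives of uS_J, wS_J and u^*, w^* ∈ S_J. Then σ_C(x^{u,w}) = q^{(ℓ(u^*)+ℓ(w^*))/2} if u^{-1}w ∈ S_J, and σ_C(x^{u,w}) = 0 otherwise. -/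
/- Common combinatorial setup: star networks, covering path families,
   crossing/noncrossing statistics, and the base ring ℤ[q^{1/2},q^{-1/2}]. -/

open Equiv Finset
open scoped Classical

noncomputable section
open Equiv Finset
open scoped Classical

/-- `w` is the minimum-length representative of its coset (the paper's left
coset `wS_J`): no inversion of `w` has both values in the interval `J`. -/
def isMinLC {n : ℕ} (J : Fin n × Fin n) (w : Perm (Fin n)) : Prop :=
  ∀ i j : Fin n, i < j → memJ J (w i) → memJ J (w j) → w i < w j

namespace StarAux



variable {n : ℕ}

def ind1 (J : Fin n × Fin n) (p p' : Fin n) : ℕ :=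
  if memJ J p ∧ memJ J p' ∧ p' < p then 1 else 0

def ind (J : Fin n × Fin n) (e e' : Fin n × Fin n) : ℕ := ind1 J e.1 e'.1 + ind1 J e.2 e'.2

def cnt (J : Fin n × Fin n) (e : Fin n × Fin n) (t : List (Fin n × Fin n)) : ℕ :=
  (t.map (ind J e)).sum

def invc (J : Fin n × Fin n) : List (Fin n × Fin n) → ℕ
  | [] => 0
  | e :: t => cnt J e t + invc J t

lemma cnt_cons (J : Fin n × Fin n) (e a : Fin n × Fin n) (t : List (Fin n × Fin n)) :
    cnt J e (a :: t) = ind J e a + cnt J e t := by simp [cnt]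

lemma cnt_append (J : Fin n × Fin n) (e : Fin n × Fin n) (t s : List (Fin n × Fin n)) :
    cnt J e (t ++ s) = cnt J e t + cnt J e s := by simp [cnt]

lemma invc_append (J : Fin n × Fin n) (x m : List (Fin n × Fin n)) :
    invc J (x ++ m) = invc J x + (x.map fun e => cnt J e m).sum + invc J m := by
  induction x with
  | nil => simp [invc]
  | cons e t ih => simp [invc, cnt_append, ih]; omega

lemma sum_map_add {α : Type*} (f g : α → ℕ) (l : List α) :
    (l.map fun e => f e + g e).sum = (l.map f).sum + (l.map g).sum := by
  induction l with
  | nil => simp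
  | cons a t ih => simp [ih]; omega

def base (J : Fin n × Fin n) (x y : List (Fin n × Fin n)) (p1 p2 q1 q2 : Fin n) : ℕ :=
  invc J x + invc J y
  + (x.map fun e => ind1 J e.1 p1 + ind1 J e.1 p2 + ind1 J e.2 q1 + ind1 J e.2 q2 + cnt J e y).sum
  + (y.map fun e => ind1 J p1 e.1 + ind1 J p2 e.1 + ind1 J q1 e.2 + ind1 J q2 e.2).sum

lemma base_comm_p (J : Fin n × Fin n) (x y : List (Fin n × Fin n)) (p1 p2 q1 q2 : Fin n) :
    base J x y p1 p2 q1 q2 = base J x y p2 p1 q1 q2 := by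
  unfold base
  have h1 : (fun (e : Fin n × Fin n) => ind1 J e.1 p1 + ind1 J e.1 p2 + ind1 J e.2 q1 + ind1 J e.2 q2 + cnt J e y)
      = (fun e => ind1 J e.1 p2 + ind1 J e.1 p1 + ind1 J e.2 q1 + ind1 J e.2 q2 + cnt J e y) := by
    funext e; ring
  have h2 : (fun (e : Fin n × Fin n) => ind1 J p1 e.1 + ind1 J p2 e.1 + ind1 J q1 e.2 + ind1 J q2 e.2)
      = (fun e => ind1 J p2 e.1 + ind1 J p1 e.1 + ind1 J q1 e.2 + ind1 J q2 e.2) := by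
    funext e; ring
  rw [h1, h2]

lemma base_comm_q (J : Fin n × Fin n) (x y : List (Fin n × Fin n)) (p1 p2 q1 q2 : Fin n) :
    base J x y p1 p2 q1 q2 = base J x y p1 p2 q2 q1 := by
  unfold base
  have h1 : (fun (e : Fin n × Fin n) => ind1 J e.1 p1 + ind1 J e.1 p2 + ind1 J e.2 q1 + ind1 J e.2 q2 + cnt J e y)
      = (fun e => ind1 J e.1 p1 + ind1 J e.1 p2 + ind1 J e.2 q2 + ind1 J e.2 q1 + cnt J e y) := by
    funext e; ring
  have h2 : (fun (e : Fin n × Fin n) => ind1 J p1 e.1 + ind1 J p2 e.1 + ind1 J q1 e.2 + ind1 J q2 e.2)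
      = (fun e => ind1 J p1 e.1 + ind1 J p2 e.1 + ind1 J q2 e.2 + ind1 J q1 e.2) := by
    funext e; ring
  rw [h1, h2]

lemma invc_decomp (J : Fin n × Fin n) (x y : List (Fin n × Fin n)) (p1 q1 p2 q2 : Fin n) :
    invc J (x ++ (p1, q1) :: (p2, q2) :: y)
      = base J x y p1 p2 q1 q2 + ind1 J p1 p2 + ind1 J q1 q2 := by
  rw [invc_append]
  have h1 : invc J ((p1, q1) :: (p2, q2) :: y)
      = ind1 J p1 p2 + ind1 J q1 q2 + cnt J (p1,q1) y + cnt J (p2,q2) y + invc J y := by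
    show cnt J (p1,q1) ((p2,q2)::y) + (cnt J (p2,q2) y + invc J y) = _
    rw [cnt_cons]; show ind J (p1,q1) (p2,q2) + _ + _ = _
    unfold ind; dsimp only; omega
  rw [h1]
  have h2 : (x.map fun e => cnt J e ((p1, q1) :: (p2, q2) :: y))
      = (x.map fun e => ind1 J e.1 p1 + ind1 J e.1 p2 + ind1 J e.2 q1 + ind1 J e.2 q2 + cnt J e y) := by
    apply List.map_congr_left; intro e _
    rw [cnt_cons, cnt_cons]; unfold ind; dsimp only; omega
  rw [h2]
  have h3 : cnt J (p1,q1) y + cnt J (p2,q2) y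
      = (y.map fun e => ind1 J p1 e.1 + ind1 J p2 e.1 + ind1 J q1 e.2 + ind1 J q2 e.2).sum := by
    rw [show (fun (e : Fin n × Fin n) => ind1 J p1 e.1 + ind1 J p2 e.1 + ind1 J q1 e.2 + ind1 J q2 e.2)
        = (fun e => ind J (p1,q1) e + ind J (p2,q2) e) from by funext e; dsimp only [ind]; ring]
    rw [sum_map_add]; rfl
  unfold base; omega

def entryOK {n : ℕ} (J : Fin n × Fin n) (e : Fin n × Fin n) : Prop :=
  (memJ J e.1 ↔ memJ J e.2) ∧ (¬ memJ J e.1 → e.1 = e.2)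

def validL {n : ℕ} (J : Fin n × Fin n) (ℓ : List (Fin n × Fin n)) : Prop :=
  (∀ e ∈ ℓ, entryOK J e) ∧
  ∀ h : Fin n, memJ J h → (ℓ.map Prod.fst).count h = 1 ∧ (ℓ.map Prod.snd).count h = 1

def sigl {n : ℕ} (J : Fin n × Fin n) (ℓ : List (Fin n × Fin n)) : R2 :=
  if validL J ℓ then Qp (invc J ℓ) else 0

variable {J : Fin n × Fin n}

lemma validL_perm {ℓ ℓ' : List (Fin n × Fin n)} (h : ℓ.Perm ℓ') :
    validL J ℓ ↔ validL J ℓ' := by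
  unfold validL
  constructor <;> rintro ⟨h1, h2⟩ <;> refine ⟨?_, fun a ha => ?_⟩
  · exact fun e he => h1 e (h.mem_iff.mpr he)
  · rw [← (h.map Prod.fst).count_eq, ← (h.map Prod.snd).count_eq]; exact h2 a ha
  · exact fun e he => h1 e (h.mem_iff.mp he)
  · rw [(h.map Prod.fst).count_eq, (h.map Prod.snd).count_eq]; exact h2 a ha

lemma perm_pair (a b : Fin n × Fin n) (x y : List (Fin n × Fin n)) :
    (x ++ a :: b :: y).Perm (x ++ b :: a :: y) :=
  List.Perm.append_left x (List.Perm.swap b a y)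

lemma sigl_row (i c d : Fin n) (hcd : c ≠ d) (x y : List (Fin n × Fin n)) :
    sigl J (x ++ (i,c) :: (i,d) :: y) = 0 := by
  rw [sigl, if_neg]
  rintro ⟨hent, hcnt⟩
  by_cases hi : memJ J i
  · have h := (hcnt i hi).1
    rw [List.map_append] at h
    simp only [List.map_cons, List.count_append, List.count_cons] at h
    simp at h; omega
  · have h1 := (hent (i,c) (by simp)).2 hi
    have h2 := (hent (i,d) (by simp)).2 hi
    exact hcd (h1.symm.trans h2)

lemma sigl_col (k c d : Fin n) (hcd : c ≠ d) (x y : List (Fin n × Fin n)) :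
    sigl J (x ++ (c,k) :: (d,k) :: y) = 0 := by
  rw [sigl, if_neg]
  rintro ⟨hent, hcnt⟩
  by_cases hk : memJ J k
  · have h := (hcnt k hk).2
    rw [List.map_append] at h
    simp only [List.map_cons, List.count_append, List.count_cons] at h
    simp at h; omega
  · have e1 := hent (c,k) (by simp)
    have e2 := hent (d,k) (by simp)
    have hc : ¬ memJ J c := fun h => hk (e1.1.mp h)
    have hd : ¬ memJ J d := fun h => hk (e2.1.mp h)
    exact hcd ((e1.2 hc).trans (e2.2 hd).symm)

lemma ind1_lt_zero {p p' : Fin n} (h : p ≤ p') : ind1 J p p' = 0 := by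
  rw [ind1, if_neg]; rintro ⟨-, -, hlt⟩; exact absurd hlt (not_lt.mpr h)

lemma sigl_comm {i j k l : Fin n} (hij : i < j) (hkl : k < l) (x y : List (Fin n × Fin n)) :
    sigl J (x ++ (j,k) :: (i,l) :: y) = sigl J (x ++ (i,l) :: (j,k) :: y) := by
  have hperm := perm_pair (j,k) (i,l) x y
  by_cases hv : validL J (x ++ (j,k) :: (i,l) :: y)
  · have hv' := (validL_perm hperm).mp hv
    rw [sigl, sigl, if_pos hv, if_pos hv']
    congr 2
    rw [invc_decomp, invc_decomp, base_comm_p, base_comm_q]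
    have e1 := hv.1 (j,k) (by simp)
    have e2 := hv.1 (i,l) (by simp)
    have h1 : ind1 J j i = ind1 J l k := by
      rw [ind1, ind1]
      refine if_congr ?_ rfl rfl
      constructor
      · rintro ⟨hj, hi, -⟩; exact ⟨e2.1.mp hi, e1.1.mp hj, hkl⟩
      · rintro ⟨hl, hk, -⟩; exact ⟨e1.1.mpr hk, e2.1.mpr hl, hij⟩
    rw [h1, ind1_lt_zero hkl.le, ind1_lt_zero hij.le]
    omega
  · rw [sigl, sigl, if_neg hv, if_neg (fun h => hv ((validL_perm hperm).mpr h))]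

lemma quasiC_entries {i j k l : Fin n} (hij : i < j) (hkl : k < l)
    (h1 : entryOK J (i,l)) (h2 : entryOK J (j,k)) :
    memJ J i ∧ memJ J j ∧ memJ J k ∧ memJ J l := by
  obtain ⟨h1a, h1b⟩ := h1
  obtain ⟨h2a, h2b⟩ := h2
  simp only [memJ, Fin.le_def, Fin.lt_def, Fin.ext_iff] at *
  omega

lemma Qp_add (a b : ℤ) : Qp (a + b) = Qp a * Qp b := LaurentPolynomial.T_add a b

lemma sigl_quasi {i j k l : Fin n} (hij : i < j) (hkl : k < l) (x y : List (Fin n × Fin n)) :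
    sigl J (x ++ (j,l) :: (i,k) :: y)
      = sigl J (x ++ (i,k) :: (j,l) :: y)
        + (Qp 1 - Qp (-1)) * sigl J (x ++ (i,l) :: (j,k) :: y) := by
  have hperm := perm_pair (j,l) (i,k) x y
  by_cases hall : memJ J i ∧ memJ J j ∧ memJ J k ∧ memJ J l
  · obtain ⟨hi, hj, hk, hl⟩ := hall
    have hAC : validL J (x ++ (j,l) :: (i,k) :: y) ↔ validL J (x ++ (i,l) :: (j,k) :: y) := by
      unfold validL
      constructor <;> rintro ⟨hent, hcnt⟩ <;> refine ⟨?_, fun a ha => ?_⟩ <;>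
        [skip; skip; skip; skip]
      · intro e he
        rw [List.mem_append, List.mem_cons, List.mem_cons] at he
        rcases he with he | he | he | he
        · exact hent e (by simp [he])
        · subst he; exact ⟨iff_of_true hi hl, fun h => absurd hi h⟩
        · subst he; exact ⟨iff_of_true hj hk, fun h => absurd hj h⟩
        · exact hent e (by simp [he])
      · have := hcnt a ha
        rw [List.map_append, List.map_append] at this ⊢
        simp only [List.map_cons, List.count_append, List.count_cons] at this ⊢
        constructor <;> [skip; skip] <;> simp_all <;> omega
      · intro e he
        rw [List.mem_append, List.mem_cons, List.mem_cons] at he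
        rcases he with he | he | he | he
        · exact hent e (by simp [he])
        · subst he; exact ⟨iff_of_true hj hl, fun h => absurd hj h⟩
        · subst he; exact ⟨iff_of_true hi hk, fun h => absurd hi h⟩
        · exact hent e (by simp [he])
      · have := hcnt a ha
        rw [List.map_append, List.map_append] at this ⊢
        simp only [List.map_cons, List.count_append, List.count_cons] at this ⊢
        constructor <;> [skip; skip] <;> simp_all <;> omega
    by_cases hv : validL J (x ++ (j,l) :: (i,k) :: y)
    · have hvB := (validL_perm hperm).mp hv
      have hvC := hAC.mp hv
      rw [sigl, sigl, sigl, if_pos hv, if_pos hvB, if_pos hvC]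
      rw [invc_decomp, invc_decomp, invc_decomp]
      rw [show ind1 J j i = 1 from by rw [ind1, if_pos ⟨hj, hi, hij⟩]]
      rw [show ind1 J l k = 1 from by rw [ind1, if_pos ⟨hl, hk, hkl⟩]]
      rw [ind1_lt_zero hij.le, ind1_lt_zero hkl.le]
      rw [base_comm_p (p1 := j), base_comm_q (q1 := l)]
      set T := base J x y i j k l with hT
      have h2 : ((T + 1 + 1 : ℕ) : ℤ) = (T : ℤ) + 1 + 1 := by push_cast; ring
      have h3 : ((T + 0 + 0 : ℕ) : ℤ) = (T : ℤ) := by push_cast; ring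
      have h4 : ((T + 0 + 1 : ℕ) : ℤ) = (T : ℤ) + 1 := by push_cast; ring
      rw [h2, h3, h4]
      rw [show ((T:ℤ) + 1 + 1) = (T + (1 + 1) : ℤ) from by ring, Qp_add,
        show ((T:ℤ) + 1) = (T + 1 : ℤ) from rfl, Qp_add, Qp_add]
      have hinv : Qp (-1) * Qp 1 = 1 := by
        rw [← Qp_add]; norm_num; rw [Qp, LaurentPolynomial.T_zero]
      ring_nf
      linear_combination (Qp (T:ℤ)) * hinv
    · have hvB := fun h => hv ((validL_perm hperm).mpr h)
      have hvC := fun h => hv (hAC.mpr h)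
      rw [sigl, sigl, sigl, if_neg hv, if_neg hvB, if_neg hvC]
      ring
  · have hC : ¬ validL J (x ++ (i,l) :: (j,k) :: y) := by
      rintro ⟨hent, -⟩
      exact hall (quasiC_entries hij hkl (hent (i,l) (by simp)) (hent (j,k) (by simp)))
    have hC0 : sigl J (x ++ (i,l) :: (j,k) :: y) = 0 := by rw [sigl, if_neg hC]
    rw [hC0, mul_zero, add_zero]
    by_cases hv : validL J (x ++ (j,l) :: (i,k) :: y)
    · have hvB := (validL_perm hperm).mp hv
      rw [sigl, sigl, if_pos hv, if_pos hvB]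
      congr 2
      rw [invc_decomp, invc_decomp]
      have e1 := hv.1 (j,l) (by simp)
      have e2 := hv.1 (i,k) (by simp)
      have hji : ind1 J j i = 0 := by
        rw [ind1, if_neg]; rintro ⟨hj, hi, -⟩
        exact hall ⟨hi, hj, e2.1.mp hi, e1.1.mp hj⟩
      have hlk : ind1 J l k = 0 := by
        rw [ind1, if_neg]; rintro ⟨hl, hk, -⟩
        exact hall ⟨e2.1.mpr hk, e1.1.mpr hl, hk, hl⟩
      rw [hji, hlk, ind1_lt_zero hij.le, ind1_lt_zero hkl.le,
        base_comm_p (p1 := j), base_comm_q (q1 := l)]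
    · rw [sigl, sigl, if_neg hv, if_neg (fun h => hv ((validL_perm hperm).mpr h))]

section Alg
variable {n : ℕ}

abbrev FA (n : ℕ) := FreeAlgebra R2 (Fin n × Fin n)

def wordOf (ℓ : List (Fin n × Fin n)) : FA n := (ℓ.map (FreeAlgebra.ι R2)).prod

lemma wordOf_append (ℓ₁ ℓ₂ : List (Fin n × Fin n)) :
    wordOf (ℓ₁ ++ ℓ₂) = wordOf ℓ₁ * wordOf ℓ₂ := by simp [wordOf]

lemma wordOf_cons (e : Fin n × Fin n) (ℓ : List (Fin n × Fin n)) :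
    wordOf (e :: ℓ) = FreeAlgebra.ι R2 e * wordOf ℓ := by simp [wordOf]

def fm : FA n ≃ₐ[R2] MonoidAlgebra R2 (FreeMonoid (Fin n × Fin n)) :=
  FreeAlgebra.equivMonoidAlgebraFreeMonoid

lemma fm_ι (e : Fin n × Fin n) :
    fm (FreeAlgebra.ι R2 e) = MonoidAlgebra.single (FreeMonoid.of e) 1 := by
  simp [fm, FreeAlgebra.equivMonoidAlgebraFreeMonoid, FreeAlgebra.lift_ι_apply]

lemma fm_word (ℓ : List (Fin n × Fin n)) :
    fm (wordOf ℓ) = MonoidAlgebra.single (FreeMonoid.ofList ℓ) 1 := by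
  induction ℓ with
  | nil =>
    show fm (1 : FA n) = _
    rw [map_one]
    rfl
  | cons e t ih =>
    rw [wordOf_cons, map_mul, fm_ι, ih, MonoidAlgebra.single_mul_single, one_mul]
    rfl

def sigF (J : Fin n × Fin n) : FA n →ₗ[R2] R2 :=
  (Finsupp.linearCombination R2
    (fun w : FreeMonoid (Fin n × Fin n) => sigl J (FreeMonoid.toList w))).comp
    ((MonoidAlgebra.coeffLinearEquiv R2).toLinearMap.comp (fm.toLinearMap : FA n →ₗ[R2] _))

lemma sigF_word (J : Fin n × Fin n) (ℓ : List (Fin n × Fin n)) :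
    sigF J (wordOf ℓ) = sigl J ℓ := by
  rw [sigF, LinearMap.comp_apply]
  show (Finsupp.linearCombination R2 fun w => sigl J (FreeMonoid.toList w)) (fm (wordOf ℓ)).coeff = sigl J ℓ
  rw [fm_word, MonoidAlgebra.coeff_single, Finsupp.linearCombination_single, FreeMonoid.toList_ofList, one_smul]

def bFM : Module.Basis (FreeMonoid (Fin n × Fin n)) R2 (FA n) :=
  FreeAlgebra.basisFreeMonoid R2 (Fin n × Fin n)

lemma bFM_apply (w : FreeMonoid (Fin n × Fin n)) :
    (bFM : Module.Basis _ R2 (FA n)) w = wordOf (FreeMonoid.toList w) := by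
  apply fm.injective
  rw [fm_word, FreeMonoid.ofList_toList]
  rw [bFM, FreeAlgebra.basisFreeMonoid, Module.Basis.map_apply]
  show fm ((fm (n := n)).symm.toLinearEquiv ((MonoidAlgebra.coeffLinearEquiv R2).symm (Finsupp.basisSingleOne w))) = _
  rw [AlgEquiv.toLinearEquiv_apply, AlgEquiv.apply_symm_apply]
  rfl
end Alg

section Rel
variable {n : ℕ}

lemma word_sandwich (tx ty : List (Fin n × Fin n)) (e1 e2 : Fin n × Fin n) :
    wordOf tx * (FreeAlgebra.ι R2 e1 * FreeAlgebra.ι R2 e2) * wordOf ty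
      = wordOf (tx ++ e1 :: e2 :: ty) := by
  rw [wordOf_append, wordOf_cons, wordOf_cons]
  simp only [mul_assoc]

lemma sigF_base {J : Fin n × Fin n} {a b : FA n} (hrel : qmbRel n a b) :
    ∀ x y : FA n, sigF J (x * a * y) = sigF J (x * b * y) := by
  have key : ∀ wx wy : FreeMonoid (Fin n × Fin n),
      sigF J (bFM wx * a * bFM wy) = sigF J (bFM wx * b * bFM wy) := by
    intro wx wy
    rw [bFM_apply, bFM_apply]
    set tx := FreeMonoid.toList wx
    set ty := FreeMonoid.toList wy
    cases hrel with
    | @row i k l h =>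
      rw [word_sandwich, mul_smul_comm, smul_mul_assoc, word_sandwich, map_smul, sigF_word,
        sigF_word, sigl_row i l k h.ne', sigl_row i k l h.ne, smul_zero]
    | @col i j k h =>
      rw [word_sandwich, mul_smul_comm, smul_mul_assoc, word_sandwich, map_smul, sigF_word,
        sigF_word, sigl_col k j i h.ne', sigl_col k i j h.ne, smul_zero]
    | @comm i j k l hij hkl =>
      rw [word_sandwich, word_sandwich, sigF_word, sigF_word]
      exact sigl_comm hij hkl tx ty
    | @quasi i j k l hij hkl =>
      rw [word_sandwich, mul_add, add_mul, mul_smul_comm, smul_mul_assoc, word_sandwich,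
        word_sandwich, map_add, map_smul, sigF_word, sigF_word, sigF_word, smul_eq_mul]
      exact sigl_quasi hij hkl tx ty
  intro x y
  have step1 : ∀ (wx : FreeMonoid (Fin n × Fin n)) (y : FA n),
      sigF J (bFM wx * a * y) = sigF J (bFM wx * b * y) := by
    intro wx
    have hext := Module.Basis.ext (b := bFM)
      (f₁ := (sigF J).comp (LinearMap.mulLeft R2 (bFM wx * a)))
      (f₂ := (sigF J).comp (LinearMap.mulLeft R2 (bFM wx * b)))
      (fun wy => by
        simp only [LinearMap.comp_apply, LinearMap.mulLeft_apply]
        exact key wx wy)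
    intro y
    have := LinearMap.congr_fun hext y
    simpa only [LinearMap.comp_apply, LinearMap.mulLeft_apply] using this
  have hext2 := Module.Basis.ext (b := bFM)
    (f₁ := (sigF J).comp ((LinearMap.mulRight R2 y).comp (LinearMap.mulRight R2 a)))
    (f₂ := (sigF J).comp ((LinearMap.mulRight R2 y).comp (LinearMap.mulRight R2 b)))
    (fun wx => by
      simp only [LinearMap.comp_apply, LinearMap.mulRight_apply]
      exact step1 wx y)
  have := LinearMap.congr_fun hext2 x
  simpa only [LinearMap.comp_apply, LinearMap.mulRight_apply] using this

lemma sigF_ringQuotRel {J : Fin n × Fin n} {a b : FA n}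
    (h : RingQuot.Rel (qmbRel n) a b) :
    ∀ x y : FA n, sigF J (x * a * y) = sigF J (x * b * y) := by
  induction h with
  | of h => exact sigF_base h
  | add_left _ ih =>
    intro x y
    rw [mul_add, add_mul, mul_add, add_mul, map_add, map_add, ih x y]
  | mul_left _ ih =>
    intro x y
    rename_i a' b' c _
    rw [show x * (a' * c) * y = x * a' * (c * y) from by simp only [mul_assoc],
      show x * (b' * c) * y = x * b' * (c * y) from by simp only [mul_assoc]]
    exact ih x (c * y)
  | mul_right _ ih =>
    intro x y
    rename_i c a' b' _
    rw [show x * (c * a') * y = x * c * a' * y from by simp only [mul_assoc],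
      show x * (c * b') * y = x * c * b' * y from by simp only [mul_assoc]]
    exact ih (x * c) y

lemma sigF_eqvGen {J : Fin n × Fin n} :
    ∀ {a b : FA n}, Relation.EqvGen (RingQuot.Rel (qmbRel n)) a b → sigF J a = sigF J b := by
  intro a b h
  induction h with
  | rel a b h => simpa using sigF_ringQuotRel h 1 1
  | refl => rfl
  | symm _ _ _ ih => exact ih.symm
  | trans _ _ _ _ _ ih1 ih2 => exact ih1.trans ih2

lemma sigF_of_mk_eq {J : Fin n × Fin n} {a b : FA n}
    (h : RingQuot.mkAlgHom R2 (qmbRel n) a = RingQuot.mkAlgHom R2 (qmbRel n) b) :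
    sigF J a = sigF J b := by
  apply sigF_eqvGen (J := J)
  apply Quot.eq.mp
  have h' : RingQuot.mkRingHom (qmbRel n) a = RingQuot.mkRingHom (qmbRel n) b := by
    rw [← RingQuot.mkAlgHom_coe R2 (qmbRel n)]
    exact h
  rw [RingQuot.mkRingHom_def] at h'
  simp only [RingHom.coe_mk, MonoidHom.coe_mk, OneHom.coe_mk] at h'
  exact congrArg RingQuot.toQuot h'
end Rel

section Eval
variable {n : ℕ} {J : Fin n × Fin n} {v : Perm (Fin n)}

lemma inSJ_mem (hv : inSJ J v) {x : Fin n} (hx : v x ≠ x) : memJ J x ∧ memJ J (v x) := by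
  refine ⟨hv x hx, ?_⟩
  by_cases h2 : v (v x) = v x
  · exact absurd (v.injective h2) hx
  · exact hv (v x) h2

lemma inSJ_apply_mem (hv : inSJ J v) {x : Fin n} (hx : memJ J x) : memJ J (v x) := by
  by_cases h : v x = x
  · rw [h]; exact hx
  · exact (inSJ_mem hv h).2

lemma inSJ_fix (hv : inSJ J v) {x : Fin n} (hx : ¬ memJ J x) : v x = x := by
  by_contra h; exact hx (hv x h)

lemma inv_mem (hv : inSJ J v) {s t : Fin n} (hst : s < t) (hvt : v t < v s) :
    memJ J s ∧ memJ J t ∧ memJ J (v s) ∧ memJ J (v t) := by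
  by_cases hs : v s = s <;> by_cases ht : v t = t
  · rw [hs, ht] at hvt; exact absurd hst (not_lt.mpr hvt.le)
  · have h1 := inSJ_mem hv ht
    have h2 : memJ J s := by
      have hsv := congrArg Fin.val hs
      have e1 := h1.1; have e2 := h1.2
      simp only [memJ, Fin.le_def, Fin.lt_def] at e1 e2 hvt hst ⊢
      omega
    exact ⟨h2, h1.1, by rw [hs]; exact h2, h1.2⟩
  · have h1 := inSJ_mem hv hs
    have h2 : memJ J t := by
      have htv := congrArg Fin.val ht
      have e1 := h1.1; have e2 := h1.2
      simp only [memJ, Fin.le_def, Fin.lt_def] at e1 e2 hvt hst ⊢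
      omega
    exact ⟨h1.1, h2, h1.2, by rw [ht]; exact h2⟩
  · exact ⟨(inSJ_mem hv hs).1, (inSJ_mem hv ht).1, (inSJ_mem hv hs).2, (inSJ_mem hv ht).2⟩

lemma count_ofFn {α : Type*} [DecidableEq α] : ∀ {N : ℕ} (g : Fin N → α) (a : α),
    (List.ofFn g).count a = ∑ k : Fin N, if g k = a then 1 else 0 := by
  intro N
  induction N with
  | zero => intro g a; simp
  | succ N ih =>
    intro g a
    rw [List.ofFn_succ, List.count_cons, ih, Fin.sum_univ_succ]
    simp only [beq_iff_eq]
    omega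

lemma cnt_ofFn (J : Fin n × Fin n) {N : ℕ} (e : Fin n × Fin n) (g : Fin N → Fin n × Fin n) :
    cnt J e (List.ofFn g) = ∑ t : Fin N, ind J e (g t) := by
  rw [cnt, List.map_ofFn, List.sum_ofFn]; rfl

lemma invc_ofFn (J : Fin n × Fin n) : ∀ {N : ℕ} (g : Fin N → Fin n × Fin n),
    invc J (List.ofFn g) = ∑ s : Fin N, ∑ t : Fin N, if s < t then ind J (g s) (g t) else 0 := by
  intro N
  induction N with
  | zero => intro g; simp [invc]
  | succ N ih =>
    intro g
    rw [List.ofFn_succ]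
    show cnt J (g 0) (List.ofFn fun i => g i.succ) + invc J (List.ofFn fun i => g i.succ) = _
    rw [cnt_ofFn, ih, Fin.sum_univ_succ]
    congr 1
    · rw [Fin.sum_univ_succ]
      simp [Fin.succ_pos]
    · apply Finset.sum_congr rfl
      intro s _
      rw [Fin.sum_univ_succ]
      simp [Fin.succ_lt_succ_iff, Fin.not_lt_zero]

def pairWord (u w : Perm (Fin n)) : List (Fin n × Fin n) := List.ofFn fun k => (u k, w k)

lemma invc_pairWord (J : Fin n × Fin n) (u w : Perm (Fin n)) :
    invc J (pairWord u w)
      = ((univ : Finset (Fin n × Fin n)).filter fun p =>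
          p.1 < p.2 ∧ memJ J (u p.1) ∧ memJ J (u p.2) ∧ u p.2 < u p.1).card
      + ((univ : Finset (Fin n × Fin n)).filter fun p =>
          p.1 < p.2 ∧ memJ J (w p.1) ∧ memJ J (w p.2) ∧ w p.2 < w p.1).card := by
  rw [pairWord, invc_ofFn, Finset.card_filter, Finset.card_filter,
    Fintype.sum_prod_type, Fintype.sum_prod_type, ← Finset.sum_add_distrib]
  apply Finset.sum_congr rfl; intro s _
  rw [← Finset.sum_add_distrib]
  apply Finset.sum_congr rfl; intro t _
  by_cases hst : s < t
  · simp [ind, ind1, hst]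
  · simp [hst]

lemma cardJ (ustar uminus : Perm (Fin n)) (hstar : inSJ J ustar) (hmin : isMinLC J uminus) :
    ((univ : Finset (Fin n × Fin n)).filter fun p =>
        p.1 < p.2 ∧ memJ J ((ustar * uminus) p.1) ∧ memJ J ((ustar * uminus) p.2)
          ∧ (ustar * uminus) p.2 < (ustar * uminus) p.1).card = len ustar := by
  rw [len]
  apply Finset.card_bij (fun p _ => (uminus p.1, uminus p.2))
  · intro p hp
    rw [Finset.mem_filter] at hp ⊢
    obtain ⟨-, h1, hm1, hm2, hlt⟩ := hp
    simp only [Perm.mul_apply] at hm1 hm2 hlt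
    have hj1 : memJ J (uminus p.1) := by
      by_cases h : ustar (uminus p.1) = uminus p.1
      · rwa [h] at hm1
      · exact (inSJ_mem hstar h).1
    have hj2 : memJ J (uminus p.2) := by
      by_cases h : ustar (uminus p.2) = uminus p.2
      · rwa [h] at hm2
      · exact (inSJ_mem hstar h).1
    exact ⟨Finset.mem_univ _, hmin p.1 p.2 h1 hj1 hj2, hlt⟩
  · intro p1 h1 p2 h2 he
    rw [Prod.mk.injEq] at he
    exact Prod.ext (uminus.injective he.1) (uminus.injective he.2)
  · intro b hb
    rw [Finset.mem_filter] at hb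
    obtain ⟨-, hb1, hb2⟩ := hb
    have hmem := inv_mem hstar hb1 hb2
    refine ⟨(uminus⁻¹ b.1, uminus⁻¹ b.2), ?_, ?_⟩
    · rw [Finset.mem_filter]
      have e1 : uminus (uminus⁻¹ b.1) = b.1 := uminus.apply_symm_apply b.1
      have e2 : uminus (uminus⁻¹ b.2) = b.2 := uminus.apply_symm_apply b.2
      refine ⟨Finset.mem_univ _, ?_, ?_, ?_, ?_⟩
      · rcases lt_trichotomy (uminus⁻¹ b.1) (uminus⁻¹ b.2) with h | h | h
        · exact h
        · exact absurd (congrArg uminus h) (by rw [e1, e2]; exact fun hh => hb1.ne hh)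
        · have := hmin _ _ h (by rw [e2]; exact hmem.2.1) (by rw [e1]; exact hmem.1)
          rw [e1, e2] at this
          exact absurd hb1 (not_lt.mpr this.le)
      · show memJ J (ustar (uminus _)); rw [e1]; exact hmem.2.2.1
      · show memJ J (ustar (uminus _)); rw [e2]; exact hmem.2.2.2
      · show ustar (uminus _) < ustar (uminus _); rw [e1, e2]; exact hb2
    · rw [Prod.mk.injEq]
      exact ⟨uminus.apply_symm_apply b.1, uminus.apply_symm_apply b.2⟩

lemma validL_pairWord (u w : Perm (Fin n)) :
    validL J (pairWord u w) ↔ inSJ J (w * u⁻¹) := by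
  constructor
  · rintro ⟨hent, -⟩ x hx
    simp only [Perm.mul_apply] at hx
    have hmem : (u (u⁻¹ x), w (u⁻¹ x)) ∈ pairWord u w := by
      rw [pairWord, List.mem_ofFn]
      exact ⟨u⁻¹ x, rfl⟩
    have h := hent _ hmem
    rw [show u (u⁻¹ x) = x from u.apply_symm_apply x] at h
    by_contra hxJ
    exact hx ((h.2 hxJ).symm)
  · intro hv
    constructor
    · intro e he
      rw [pairWord, List.mem_ofFn] at he
      obtain ⟨k, rfl⟩ := he
      have hwk : w k = (w * u⁻¹) (u k) := by
        simp [Perm.mul_apply]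
      constructor
      · show memJ J (u k) ↔ memJ J (w k)
        constructor
        · intro h; rw [hwk]; exact inSJ_apply_mem hv h
        · intro h
          by_contra h2
          have := inSJ_fix hv h2
          rw [hwk, this] at h
          exact h2 h
      · intro h2
        show u k = w k
        rw [hwk, inSJ_fix hv h2]
    · intro h hh
      constructor
      · rw [pairWord, List.map_ofFn]
        rw [show (Prod.fst ∘ fun k => ((u k : Fin n), w k)) = fun k => u k from rfl]
        rw [count_ofFn]
        have : ∀ k : Fin n, (if u k = h then (1:ℕ) else 0) = if k = u⁻¹ h then 1 else 0 := by
          intro k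
          congr 1
          simp [Equiv.apply_eq_iff_eq_symm_apply]
        rw [Finset.sum_congr rfl (fun k _ => this k), Finset.sum_ite_eq' univ (u⁻¹ h) (fun _ => 1)]
        simp
      · rw [pairWord, List.map_ofFn]
        rw [show (Prod.snd ∘ fun k => ((u k : Fin n), w k)) = fun k => w k from rfl]
        rw [count_ofFn]
        have : ∀ k : Fin n, (if w k = h then (1:ℕ) else 0) = if k = w⁻¹ h then 1 else 0 := by
          intro k
          congr 1
          simp [Equiv.apply_eq_iff_eq_symm_apply]
        rw [Finset.sum_congr rfl (fun k _ => this k), Finset.sum_ite_eq' univ (w⁻¹ h) (fun _ => 1)]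
        simp
end Eval

section Final
variable {n : ℕ} {J : Fin n × Fin n} {v : Perm (Fin n)}

lemma sigl_pairWord (u w ustar wstar uminus wminus : Perm (Fin n))
    (hustar : inSJ J ustar) (hwstar : inSJ J wstar)
    (huminus : isMinLC J uminus) (hwminus : isMinLC J wminus)
    (hufac : u = ustar * uminus) (hwfac : w = wstar * wminus) :
    sigl J (pairWord u w)
      = if inSJ J (w * u⁻¹) then Qp ((len ustar + len wstar : ℕ) : ℤ) else 0 := by
  rw [sigl]
  by_cases h : inSJ J (w * u⁻¹)
  · rw [if_pos ((validL_pairWord u w).mpr h), if_pos h]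
    congr 2
    rw [invc_pairWord, hufac, hwfac, cardJ ustar uminus hustar huminus,
      cardJ wstar wminus hwstar hwminus]
  · rw [if_neg (fun hh => h ((validL_pairWord u w).mp hh)), if_neg h]

lemma posAt_zero {m : ℕ} (vs : Fin m → Perm (Fin n)) : posAt vs 0 = 1 := by
  simp [posAt]

lemma posAt_one_fin1 (vs : Fin 1 → Perm (Fin n)) : posAt vs 1 = vs 0 := by
  rw [posAt, show (List.ofFn vs) = [vs 0] from by simp [List.ofFn_succ]]
  simp

lemma typeOf_fin1 (vs : Fin 1 → Perm (Fin n)) : typeOf vs = vs 0 := posAt_one_fin1 vs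

lemma posAt_coe_fin1 (vs : Fin 1 → Perm (Fin n)) (p : Fin 1) : posAt vs (p : ℕ) = 1 := by
  rw [show (p : ℕ) = 0 from by omega, posAt_zero]

lemma posAt_coe_fin1' (vs : Fin 1 → Perm (Fin n)) (p : Fin 1) :
    posAt vs ((p : ℕ) + 1) = vs 0 := by
  rw [show (p : ℕ) = 0 from by omega]
  exact posAt_one_fin1 vs

lemma wordInv_eval (hv : inSJ J v) :
    wordInv (fun _ : Fin 1 => J) (fun _ => v)
      = ((univ : Finset (Fin n × Fin n)).filter fun p =>
          p.1 < p.2 ∧ memJ J (v p.1) ∧ memJ J (v p.2) ∧ v p.2 < v p.1).card := by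
  rw [wordInv]
  apply Finset.card_bij (fun x _ => x.1)
  · intro x hx
    rw [Finset.mem_filter] at hx ⊢
    obtain ⟨-, h1, hm, hd⟩ := hx
    simp only [meetAt, centeredAt, posAt_coe_fin1, posAt_coe_fin1', Perm.one_apply] at hm hd
    rcases hd with ⟨-, hd⟩ | ⟨-, hd⟩
    · exact absurd h1 (not_lt.mpr hd.le)
    · exact ⟨Finset.mem_univ _, h1, (inv_mem hv h1 hd).2.2.1, (inv_mem hv h1 hd).2.2.2, hd⟩
  · intro x1 hx1 x2 hx2 he
    rw [Finset.mem_filter] at hx1 hx2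
    obtain ⟨-, h1, hm1, hd1⟩ := hx1
    obtain ⟨-, h2, hm2, hd2⟩ := hx2
    simp only [meetAt, centeredAt, posAt_coe_fin1, posAt_coe_fin1', Perm.one_apply] at hd1 hd2
    have k1 : x1.2.2 = 1 := by
      rcases hd1 with ⟨-, hd⟩ | ⟨hk, -⟩
      · exact absurd h1 (not_lt.mpr hd.le)
      · exact hk
    have k2 : x2.2.2 = 1 := by
      rcases hd2 with ⟨-, hd⟩ | ⟨hk, -⟩
      · exact absurd h2 (not_lt.mpr hd.le)
      · exact hk
    have p1 : x1.2.1 = x2.2.1 := Subsingleton.elim _ _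
    exact Prod.ext he (Prod.ext p1 (k1.trans k2.symm))
  · intro b hb
    rw [Finset.mem_filter] at hb
    obtain ⟨-, h1, hm1, hm2, hlt⟩ := hb
    have hmm := inv_mem hv h1 hlt
    refine ⟨(b, 0, 1), ?_, rfl⟩
    rw [Finset.mem_filter]
    refine ⟨Finset.mem_univ _, h1, ?_, ?_⟩
    · have hJJ : J.1 < J.2 := by
        have a1 := hm2.1; have a2 := hm1.2
        have := hlt
        simp only [Fin.le_def, Fin.lt_def] at a1 a2 this ⊢
        omega
      simp only [meetAt, centeredAt, posAt_coe_fin1, Perm.one_apply]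
      exact ⟨⟨hJJ, hmm.1⟩, hJJ, hmm.2.1⟩
    · right
      simp only [posAt_coe_fin1', Perm.one_apply]
      exact ⟨trivial, hlt⟩

lemma zGcoeff_eq (J : Fin n × Fin n) (v : Perm (Fin n)) :
    zGcoeff (fun _ : Fin 1 => J) v = sigl J (pairWord 1 v) := by
  rw [zGcoeff]
  have hv1 : inSJ J (v * 1⁻¹) ↔ inSJ J v := by
    rw [inv_one, mul_one]
  have hset : (univ : Finset (Fin 1 → Perm (Fin n))).filter
      (fun vs => IsPathFamily (fun _ => J) vs ∧ typeOf vs = v)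
      = if inSJ J v then {(fun _ => v : Fin 1 → Perm (Fin n))} else ∅ := by
    ext vs
    rw [Finset.mem_filter]
    split_ifs with h
    · simp only [Finset.mem_singleton]
      constructor
      · rintro ⟨-, -, h2⟩
        rw [typeOf_fin1] at h2
        funext p
        rw [Subsingleton.elim p 0]
        exact h2
      · rintro rfl
        exact ⟨Finset.mem_univ _, fun p => h, typeOf_fin1 _⟩
    · simp only [Finset.notMem_empty, iff_false, not_and]
      intro _ h1 h2
      apply h
      rw [typeOf_fin1] at h2
      rw [← h2]
      exact h1 0
  rw [hset]
  by_cases h : inSJ J v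
  · rw [if_pos h, Finset.sum_singleton, sigl, if_pos ((validL_pairWord 1 v).mpr (hv1.mpr h))]
    congr 2
    rw [wordInv_eval h, invc_pairWord]
    have hz : ((univ : Finset (Fin n × Fin n)).filter fun p =>
        p.1 < p.2 ∧ memJ J ((1 : Perm (Fin n)) p.1) ∧ memJ J ((1 : Perm (Fin n)) p.2)
          ∧ (1 : Perm (Fin n)) p.2 < (1 : Perm (Fin n)) p.1).card = 0 := by
      rw [Finset.card_eq_zero, Finset.filter_eq_empty_iff]
      rintro p - ⟨hp1, -, -, hp2⟩
      simp only [Perm.one_apply] at hp2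
      exact absurd hp1 (not_lt.mpr hp2.le)
    rw [hz, zero_add]
  · rw [if_neg h, Finset.sum_empty, sigl, if_neg (fun hh => h (hv1.mp ((validL_pairWord 1 v).mp hh)))]

lemma xmon_eq (u w : Perm (Fin n)) :
    xmon u w = RingQuot.mkAlgHom R2 (qmbRel n) (wordOf (pairWord u w)) := by
  unfold xmon wordOf pairWord
  rw [List.map_ofFn, map_list_prod, List.map_ofFn]
  rfl

end Final

end StarAux

/-- Lemma 3.3 / `l:sigmareversalinv`.  Let the simple star
network `G_J` have weighted path matrix `C`, and let `u, w ∈ S_n` have the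
unique factorizations `u = u_- u^*`, `w = w_- w^*` (in the paper's product
convention; below `u = u^* ∘ u_-`, `w = w^* ∘ w_-` as functions) with
`u^*, w^* ∈ S_J` and `u_-, w_-` minimum-length coset representatives.  Then
`σ_C(x^{u,w}) = q^{(ℓ(u^*)+ℓ(w^*))/2}` if `u⁻¹w ∈ S_J`, and `= 0` otherwise.
Here `σ_C(x^{u,w})` is evaluated by expanding `x^{u,w}` in the basis
`{x^{e,v}}` of the immanant space of `A_n(q)` (the unique coefficients `c`)
and applying `x^{e,v} ↦ [z_G] c_{1,v_1} ⋯ c_{n,v_n}`. -/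
theorem sigma_simple_star_coset
    {n : ℕ} (J : Fin n × Fin n) (hJ : J.1 ≤ J.2)
    (u w ustar wstar uminus wminus : Perm (Fin n))
    (hustar : inSJ J ustar) (hwstar : inSJ J wstar)
    (huminus : isMinLC J uminus) (hwminus : isMinLC J wminus)
    (hufac : u = ustar * uminus) (hwfac : w = wstar * wminus)
    (c : Perm (Fin n) → R2)
    (hc : xmon u w = ∑ v : Perm (Fin n), c v • xmon 1 v) :
    (inSJ J (w * u⁻¹) →
      ∑ v : Perm (Fin n), c v * zGcoeff (fun _ : Fin 1 => J) v =
        Qp ((len ustar + len wstar : ℕ) : ℤ)) ∧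
    (¬ inSJ J (w * u⁻¹) →
      ∑ v : Perm (Fin n), c v * zGcoeff (fun _ : Fin 1 => J) v = 0) := by
  have h1 : RingQuot.mkAlgHom R2 (qmbRel n) (StarAux.wordOf (StarAux.pairWord u w))
      = RingQuot.mkAlgHom R2 (qmbRel n)
        (∑ v : Perm (Fin n), c v • StarAux.wordOf (StarAux.pairWord 1 v)) := by
    rw [map_sum, ← StarAux.xmon_eq u w]
    simp_rw [map_smul, ← StarAux.xmon_eq]
    exact hc
  have h2 := StarAux.sigF_of_mk_eq (J := J) h1
  rw [map_sum] at h2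
  rw [StarAux.sigF_word] at h2
  simp_rw [map_smul, StarAux.sigF_word, smul_eq_mul] at h2
  have h3 : ∑ v : Perm (Fin n), c v * zGcoeff (fun _ : Fin 1 => J) v
      = StarAux.sigl J (StarAux.pairWord u w) := by
    simp_rw [StarAux.zGcoeff_eq]
    exact h2.symm
  rw [StarAux.sigl_pairWord u w ustar wstar uminus wminus hustar hwstar huminus hwminus
    hufac hwfac] at h3
  constructor
  · intro h; rw [h3, if_pos h]
  · intro h; rw [h3, if_neg h]

end
end

section
/- Let the path family π cover the star network G = G' ∘ H, with restrictions π^{G'}, π^H to G', H. Fix u ∈ S_n and set w = u·type(π) and v = u·type(π^{G'}). Then incross(U(π,u,w)) = incross(U(π^{G'},u,v)) + incross(U(π^H,v,w)). -/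
/- Common combinatorial setup: star networks, covering path families,
   crossing/noncrossing statistics, and the base ring ℤ[q^{1/2},q^{-1/2}]. -/

open Equiv Finset
open scoped Classical

noncomputable section
open Equiv Finset
open scoped Classical


section AuxIncross
variable {n m₁ m₂ : ℕ}

lemma posAt_left' (vs : Fin (m₁ + m₂) → Perm (Fin n)) (k : ℕ) (hk : k ≤ m₁) :
    posAt vs k = posAt (fun p : Fin m₁ => vs (Fin.castAdd m₂ p)) k := by
  unfold posAt
  congr 2
  apply List.ext_getElem
  · simp; omega
  · intro i h1 h2
    simp only [List.getElem_take, List.getElem_ofFn]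
    congr 1

lemma posAt_right' (vs : Fin (m₁ + m₂) → Perm (Fin n)) (k : ℕ) :
    posAt vs (m₁ + k) = posAt (fun p : Fin m₂ => vs (Fin.natAdd m₁ p)) k * posAt vs m₁ := by
  unfold posAt
  rw [List.take_add, List.reverse_append, List.prod_append]
  have h : ((List.ofFn vs).drop m₁).take k
      = (List.ofFn fun p : Fin m₂ => vs (Fin.natAdd m₁ p)).take k := by
    apply List.ext_getElem
    · simp
    · intro i h1 h2
      simp only [List.getElem_take, List.getElem_drop, List.getElem_ofFn]
      rfl
  rw [h]

lemma ncb_left (Js : Fin m₁ → Fin n × Fin n) (Ks : Fin m₂ → Fin n × Fin n)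
    (vs : Fin (m₁ + m₂) → Perm (Fin n)) (p : Fin m₁) (i j : Fin n) :
    noncrossBelow (Fin.append Js Ks) vs (Fin.castAdd m₂ p) i j ↔
      noncrossBelow Js (fun q => vs (Fin.castAdd m₂ q)) p i j := by
  have hc : ((Fin.castAdd m₂ p : Fin (m₁ + m₂)) : ℕ) = (p : ℕ) := rfl
  have h1 : posAt vs (p : ℕ) = posAt (fun q : Fin m₁ => vs (Fin.castAdd m₂ q)) (p : ℕ) :=
    posAt_left' vs _ (le_of_lt p.isLt)
  have h2 : posAt vs ((p : ℕ) + 1) = posAt (fun q : Fin m₁ => vs (Fin.castAdd m₂ q)) ((p : ℕ) + 1) :=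
    posAt_left' vs _ p.isLt
  simp only [noncrossBelow, meetAt, centeredAt, memJ, Fin.append_left, hc, h1, h2]

lemma ncb_right (Js : Fin m₁ → Fin n × Fin n) (Ks : Fin m₂ → Fin n × Fin n)
    (vs : Fin (m₁ + m₂) → Perm (Fin n)) (p : Fin m₂) (i j : Fin n) :
    noncrossBelow (Fin.append Js Ks) vs (Fin.natAdd m₁ p) i j ↔
      noncrossBelow Ks (fun q => vs (Fin.natAdd m₁ q)) p
        (posAt vs m₁ i) (posAt vs m₁ j) := by
  have hc : ((Fin.natAdd m₁ p : Fin (m₁ + m₂)) : ℕ) = m₁ + (p : ℕ) := rfl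
  have h1 : ∀ x, posAt vs (m₁ + (p : ℕ)) x
      = posAt (fun q : Fin m₂ => vs (Fin.natAdd m₁ q)) (p : ℕ) (posAt vs m₁ x) := by
    intro x; rw [posAt_right' vs (p : ℕ)]; rfl
  have h2 : ∀ x, posAt vs (m₁ + (p : ℕ) + 1) x
      = posAt (fun q : Fin m₂ => vs (Fin.natAdd m₁ q)) ((p : ℕ) + 1) (posAt vs m₁ x) := by
    intro x; rw [Nat.add_assoc, posAt_right' vs ((p : ℕ) + 1)]; rfl
  simp only [noncrossBelow, meetAt, centeredAt, memJ, Fin.append_right, hc, h1, h2]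

end AuxIncross

/-- Lemma 3.4, second identity / `l:decomposestat`.  Let
the path family `π` cover `G = G' ∘ H`, with restrictions `π^{G'}`, `π^H`.
Fix `u ∈ S_n` and set `w = u · type(π)`, `v = u · type(π^{G'})` (as
functions, `v = type(π^{G'}) ∘ u`).  Then
`incross(U(π,u,w)) = incross(U(π^{G'},u,v)) + incross(U(π^H,v,w))`: in the
one-row tableau `U(π,u,w)` the column of the path `π_i` is `u⁻¹(i)`, and in
`U(π^H,v,w)` the column of the path of `π^H` from source `s` is `v⁻¹(s)`. -/
theorem incross_concatenation
    {n m₁ m₂ : ℕ} (Js : Fin m₁ → Fin n × Fin n) (Ks : Fin m₂ → Fin n × Fin n)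
    (hJs : ∀ p, (Js p).1 ≤ (Js p).2) (hKs : ∀ p, (Ks p).1 ≤ (Ks p).2)
    (vs : Fin (m₁ + m₂) → Perm (Fin n))
    (hvs : IsPathFamily (Fin.append Js Ks) vs)
    (u : Perm (Fin n)) :
    incrossNum (Fin.append Js Ks) vs (fun i => ((u⁻¹ i : Fin n) : ℕ)) =
      incrossNum Js (fun p => vs (Fin.castAdd m₂ p))
          (fun i => ((u⁻¹ i : Fin n) : ℕ)) +
        incrossNum Ks (fun p => vs (Fin.natAdd m₁ p))
          (fun s =>
            (((typeOf (fun p => vs (Fin.castAdd m₂ p)) * u)⁻¹ s : Fin n) : ℕ)) := by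
  classical
  set vsG := fun p : Fin m₁ => vs (Fin.castAdd m₂ p) with hvsG
  set vsH := fun p : Fin m₂ => vs (Fin.natAdd m₁ p) with hvsH
  set g := posAt vs m₁ with hgdef
  have hg : typeOf vsG = g := by
    rw [typeOf, hgdef, posAt_left' vs m₁ le_rfl]
  set colU : Fin n → ℕ := fun i => ((u⁻¹ i : Fin n) : ℕ) with hcolU
  set colH : Fin n → ℕ := fun s => (((typeOf vsG * u)⁻¹ s : Fin n) : ℕ) with hcolH
  have hcol : ∀ i, colH (g i) = colU i := by
    intro i
    simp only [hcolH, hcolU, hg, mul_inv_rev, Equiv.Perm.mul_apply, Equiv.Perm.inv_def, Equiv.symm_apply_apply]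
  rw [incrossNum, incrossNum, incrossNum]
  rw [← Finset.card_filter_add_card_filter_not
    (p := fun x : (Fin n × Fin n) × Fin (m₁ + m₂) => (x.2 : ℕ) < m₁)]
  congr 1
  · rw [Finset.filter_filter]
    apply Finset.card_bij
      (i := fun x hx => (x.1, (⟨(x.2 : ℕ), (Finset.mem_filter.mp hx).2.2⟩ : Fin m₁)))
    · intro x hx
      obtain ⟨-, ⟨hn, hcc⟩, hlt⟩ := Finset.mem_filter.mp hx
      refine Finset.mem_filter.mpr ⟨Finset.mem_univ _, ?_, hcc⟩
      have hx2 : x.2 = Fin.castAdd m₂ ⟨(x.2 : ℕ), hlt⟩ := by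
        apply Fin.ext; rfl
      rw [hx2] at hn
      exact (ncb_left Js Ks vs _ _ _).mp hn
    · intro a ha b hb hab
      have h1 : a.1 = b.1 := congrArg (fun z => z.1) hab
      have h2 : (a.2 : ℕ) = (b.2 : ℕ) := congrArg (fun z => ((z.2 : Fin m₁) : ℕ)) hab
      exact Prod.ext h1 (Fin.ext h2)
    · intro b hb
      obtain ⟨-, hn, hcc⟩ := Finset.mem_filter.mp hb
      refine ⟨(b.1, Fin.castAdd m₂ b.2), ?_, ?_⟩
      · refine Finset.mem_filter.mpr ⟨Finset.mem_univ _, ⟨?_, hcc⟩, b.2.isLt⟩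
        exact (ncb_left Js Ks vs _ _ _).mpr hn
      · apply Prod.ext rfl (Fin.ext rfl)
  · rw [Finset.filter_filter]
    apply Finset.card_bij
      (i := fun x hx => ((g x.1.1, g x.1.2),
        (⟨(x.2 : ℕ) - m₁, by
          have := (Finset.mem_filter.mp hx).2.2
          have := x.2.isLt
          omega⟩ : Fin m₂)))
    · intro x hx
      obtain ⟨-, ⟨hn, hcc⟩, hge⟩ := Finset.mem_filter.mp hx
      push_neg at hge
      refine Finset.mem_filter.mpr ⟨Finset.mem_univ _, ?_, ?_⟩
      · have hx2 : x.2 = Fin.natAdd m₁ ⟨(x.2 : ℕ) - m₁, by have := x.2.isLt; omega⟩ := by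
          apply Fin.ext; simp [Fin.natAdd]; omega
        rw [hx2] at hn
        exact (ncb_right Js Ks vs _ _ _).mp hn
      · simpa only [hcol] using hcc
    · intro a ha b hb hab
      have h1 : g a.1.1 = g b.1.1 := congrArg (fun z => z.1.1) hab
      have h2 : g a.1.2 = g b.1.2 := congrArg (fun z => z.1.2) hab
      have h3 : (a.2 : ℕ) - m₁ = (b.2 : ℕ) - m₁ :=
        congrArg (fun z => ((z.2 : Fin m₂) : ℕ)) hab
      have ha' := (Finset.mem_filter.mp ha).2.2
      have hb' := (Finset.mem_filter.mp hb).2.2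
      push_neg at ha' hb'
      refine Prod.ext (Prod.ext (g.injective h1) (g.injective h2)) (Fin.ext ?_)
      omega
    · intro b hb
      obtain ⟨-, hn, hcc⟩ := Finset.mem_filter.mp hb
      refine ⟨((g⁻¹ b.1.1, g⁻¹ b.1.2), Fin.natAdd m₁ b.2), ?_, ?_⟩
      · refine Finset.mem_filter.mpr ⟨Finset.mem_univ _, ⟨?_, ?_⟩, by simp [Fin.natAdd]⟩
        · have := (ncb_right Js Ks vs b.2 (g⁻¹ b.1.1) (g⁻¹ b.1.2)).mpr
          simp only [Equiv.Perm.inv_def, ← hgdef, Equiv.apply_symm_apply] at this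
          exact this hn
        · have e1 : colU (g⁻¹ b.1.1) = colH b.1.1 := by
            rw [← hcol (g⁻¹ b.1.1), Equiv.Perm.inv_def, Equiv.apply_symm_apply]
          have e2 : colU (g⁻¹ b.1.2) = colH b.1.2 := by
            rw [← hcol (g⁻¹ b.1.2), Equiv.Perm.inv_def, Equiv.apply_symm_apply]
          rw [e1, e2]; exact hcc
      · refine Prod.ext (Prod.ext ?_ ?_) (Fin.ext ?_)
        · exact g.apply_symm_apply b.1.1
        · exact g.apply_symm_apply b.1.2
        · simp [Fin.natAdd]


end
end

section
/- Let I = (I_1,…,I_r) be an ordered set partition of [n] of type λ, set u = u(I), and let G-tableaux W ∈ T_I(G) and U, Û ∈ U_I(G) satisfy W = δ(U) ≠ ζ(W) = δ(Û), with underlying path families π and π̂. Then there exist y ∈ S_λ and an adjacent-transposition generator s of S_λ such that U = U(π,u,yu), Û = U(π̂,u,ŷu), and ŷ = ys; in particular ℓ(ŷ) = ℓ(y) ± 1. -/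
/- Common combinatorial setup: star networks, covering path families,
   crossing/noncrossing statistics, and the base ring ℤ[q^{1/2},q^{-1/2}]. -/

open Equiv Finset
open scoped Classical

/- Young subgroups, minimal coset representatives, the induced sign character
`ε_q^λ`, and column-strict tableaux (encoded by column assignments). -/

noncomputable section
open Equiv Finset
open scoped Classical

/-- Given a composition `lam = (λ_1, …, λ_r)` of `n`, the index of the block
`B_k = [λ_1 + ⋯ + λ_{k-1} + 1, λ_1 + ⋯ + λ_k]` containing the (0-indexed)
position `i`. -/
def blockIdx (lam : List ℕ) (i : ℕ) : ℕ :=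
  ((List.range lam.length).filter fun k => (lam.take (k + 1)).sum ≤ i).length

/-- Membership in the Young subgroup `S_λ`: the permutations preserving each
block `B_k`. -/
def inYoung {n : ℕ} (lam : List ℕ) (w : Perm (Fin n)) : Prop :=
  ∀ i : Fin n, blockIdx lam ((w i : Fin n) : ℕ) = blockIdx lam (i : ℕ)

/-- `u` is the minimum-length representative of its coset `S_λ u`
(in the paper's conventions, of the left coset `u S_λ` used in the
factorization `w = w_- w^*`): `u` has no inversions whose two values lie in a
common block. -/
def isMinRep {n : ℕ} (lam : List ℕ) (u : Perm (Fin n)) : Prop :=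
  ∀ i j : Fin n, i < j →
    blockIdx lam ((u i : Fin n) : ℕ) = blockIdx lam ((u j : Fin n) : ℕ) →
      u i < u j

/-- The induced sign character `ε_q^λ = sgn ↑_{H_λ(q)}^{H_n(q)}`, computed in
the natural basis: `H_n(q)` is a free right `H_λ(q)`-module with basis
`{T_u}` indexed by the minimum-length coset representatives, every basis
element factors as `T_{τ∘u} = T_u T_τ` with `τ ∈ S_λ`, the sign character
sends `T_τ` to `(-1)^{ℓ(τ)}`, and the character of the induced module
`H_n(q) ⊗_{H_λ(q)} sgn` is obtained by summing the diagonal coefficients. -/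
def epsChar {n : ℕ} {H : Type*} [Ring H] [Algebra R2 H] (lam : List ℕ)
    (T : Module.Basis (Perm (Fin n)) R2 H) (h : H) : R2 :=
  ∑ u ∈ (univ : Finset (Perm (Fin n))).filter (fun u => isMinRep lam u),
    ∑ τ ∈ (univ : Finset (Perm (Fin n))).filter (fun τ => inYoung lam τ),
      (-1 : R2) ^ len τ * T.repr (h * T u) (τ * u)

/-- A column-strict tableau of shape `λᵗ` (whose columns therefore have
lengths `λ_1, …, λ_r`) filled with the paths of a covering path family of
type `typeOf vs`, encoded by the assignment `f` sending each path to the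
index of its column: column `k` must have `λ_k` entries, and since the
entries of a column are arranged bottom-to-top in increasing order of source
index, column-strictness says that the sink indices of the paths in a common
column also increase with the source indices. -/
def IsColStrictAssign {n m : ℕ} (lam : List ℕ) (vs : Fin m → Perm (Fin n))
    (f : Fin n → Fin lam.length) : Prop :=
  (∀ k : Fin lam.length,
      ((univ : Finset (Fin n)).filter fun i => f i = k).card = lam.get k) ∧
    ∀ i j : Fin n, f i = f j → i < j → typeOf vs i < typeOf vs j

end
/- The data of the involution ζ on the tableau set T_I.  An ordered set
partition `I = (I_1, …, I_r)` of `[n]` of type `λ` is encoded by the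
permutation `u = u(I)` (increasing on each block `B_k`, with `I_k = u(B_k)`);
an element `U(π, u, yu)` of `U_I(G)` is encoded by the covering path family
`π` (with `typeOf π = u ∘ y ∘ u⁻¹` for some `y ∈ S_λ`); its image
`W = δ(U(π,u,yu)) ∈ T_I(G)` is the tableau of shape `λᵗ` whose `k`-th column
contains the paths with sources in `I_k`, so the column of the path `i` in
`W` is `colOf lam u i`. -/

noncomputable section
open Equiv Finset
open scoped Classical

/-- The column of the path `π_i` in the tableau `δ(U(π,u,yu)) ∈ T_I`. -/
def colOf {n : ℕ} (lam : List ℕ) (u : Perm (Fin n)) (i : Fin n) : ℕ :=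
  blockIdx lam ((u⁻¹ i : Fin n) : ℕ)

/-- Column `c` of the tableau `δ(U(π,u,yu))` is column-strict: its sink
indices increase (bottom to top) together with its source indices. -/
def colStrictCol {n m : ℕ} (lam : List ℕ) (u : Perm (Fin n))
    (vs : Fin m → Perm (Fin n)) (c : ℕ) : Prop :=
  ∀ i i' : Fin n, colOf lam u i = c → colOf lam u i' = c → i < i' →
    typeOf vs i < typeOf vs i'

/-- The path family obtained by swapping the terminal subpaths of the paths
from sources `i` and `i'`, beginning at the central vertex of the factor
`G_{J_p}`: the permutation realized at factor `p` is composed with the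
transposition of the two leaving positions. -/
def zetaSwap {n m : ℕ} (vs : Fin m → Perm (Fin n)) (p : Fin m)
    (i i' : Fin n) : Fin m → Perm (Fin n) :=
  fun k => if k = p then
    Equiv.swap (posAt vs (p.1 + 1) i) (posAt vs (p.1 + 1) i') * vs p
  else vs k

/-- The data entering the definition of the involution `ζ = ζ_I` at a
non-column-strict tableau `W = δ(U(π,u,yu)) ∈ T_I(G)`:
`tc` is the greatest index of a non-column-strict column of `W`; `p` is the
greatest index such that at least two paths of column `tc` pass through the
interior vertex of `G_{J_p}`; and `j, j'` are the two positions in block `tc`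
whose paths `π_{u_j}, π_{u_{j'}}` (through that vertex) have the
right-to-left lexicographically greatest pair of sink indices, normalized so
that the sink of `π_{u_{j'}}` is the larger.  Then `ζ(W)` is obtained from
`W` by replacing `π` with `zetaSwap vs p (u j) (u j')`. -/
structure ZetaData {n m : ℕ} (Js : Fin m → Fin n × Fin n) (lam : List ℕ)
    (u : Perm (Fin n)) (vs : Fin m → Perm (Fin n)) : Type where
  tc : ℕ
  p : Fin m
  j : Fin n
  j' : Fin n
  htc : ¬ colStrictCol lam u vs tc
  htcMax : ∀ c : ℕ, tc < c → colStrictCol lam u vs c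
  hpMeet : ∃ i i' : Fin n, i ≠ i' ∧ colOf lam u i = tc ∧ colOf lam u i' = tc ∧
    centeredAt Js vs p i ∧ centeredAt Js vs p i'
  hpMax : ∀ p' : Fin m, p < p' →
    ¬ ∃ i i' : Fin n, i ≠ i' ∧ colOf lam u i = tc ∧ colOf lam u i' = tc ∧
      centeredAt Js vs p' i ∧ centeredAt Js vs p' i'
  hne : j ≠ j'
  hjcol : blockIdx lam (j : ℕ) = tc
  hjcol' : blockIdx lam (j' : ℕ) = tc
  hjcent : centeredAt Js vs p (u j)
  hjcent' : centeredAt Js vs p (u j')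
  hord : typeOf vs (u j) < typeOf vs (u j')
  hmax : ∀ k k' : Fin n, k ≠ k' →
    blockIdx lam (k : ℕ) = tc → blockIdx lam (k' : ℕ) = tc →
    centeredAt Js vs p (u k) → centeredAt Js vs p (u k') →
    typeOf vs (u k) < typeOf vs (u k') →
    (typeOf vs (u k') < typeOf vs (u j') ∨
      (k' = j' ∧ typeOf vs (u k) ≤ typeOf vs (u j)))

/-- The number `b` of paths of `π` which enter the factor `G_{J_p}` between
the paths from sources `i` and `i'`, and which also leave `G_{J_p}` between
the same two paths. -/
def betweenNum {n m : ℕ} (Js : Fin m → Fin n × Fin n) (vs : Fin m → Perm (Fin n))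
    (p : Fin m) (i i' : Fin n) : ℕ :=
  ((univ : Finset (Fin n)).filter fun x =>
    x ≠ i ∧ x ≠ i' ∧ centeredAt Js vs p x ∧
      (min (posAt vs p i) (posAt vs p i') < posAt vs p x ∧
        posAt vs p x < max (posAt vs p i) (posAt vs p i')) ∧
      (min (posAt vs (p.1 + 1) i) (posAt vs (p.1 + 1) i') < posAt vs (p.1 + 1) x ∧
        posAt vs (p.1 + 1) x < max (posAt vs (p.1 + 1) i) (posAt vs (p.1 + 1) i'))).card

end

noncomputable section AuxZeta
open Equiv Finset
open scoped Classical

lemma aux_blockIdx_mono (lam : List ℕ) {i i' : ℕ} (h : i ≤ i') :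
    blockIdx lam i ≤ blockIdx lam i' := by
  unfold blockIdx
  apply List.Sublist.length_le
  apply List.monotone_filter_right
  intro a ha
  simp only [decide_eq_true_eq] at *
  omega

lemma aux_inSJ_fix {n : ℕ} {J : Fin n × Fin n} {w : Perm (Fin n)} (h : inSJ J w)
    {x : Fin n} (hx : ¬ memJ J x) : w x = x := by
  by_contra hne; exact hx (h x hne)

lemma aux_inSJ_mem {n : ℕ} {J : Fin n × Fin n} {w : Perm (Fin n)} (h : inSJ J w)
    {x : Fin n} (hx : memJ J x) : memJ J (w x) := by
  by_contra hc
  have h1 : w (w x) = w x := aux_inSJ_fix h hc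
  have h2 := w.injective h1
  rw [h2] at hc
  exact hc hx

lemma aux_order_pres {n : ℕ} {J : Fin n × Fin n} {w : Perm (Fin n)} (h : inSJ J w)
    (x x' : Fin n) (hnot : ¬ (J.1 < J.2 ∧ memJ J x ∧ memJ J x')) :
    (w x < w x' ↔ x < x') := by
  by_cases hx : memJ J x <;> by_cases hx' : memJ J x'
  · have hJ : ¬ J.1 < J.2 := fun hlt => hnot ⟨hlt, hx, hx'⟩
    have hJ' : J.2 ≤ J.1 := le_of_not_gt hJ
    have hxx : x = x' :=
      le_antisymm (le_trans hx.2 (le_trans hJ' hx'.1)) (le_trans hx'.2 (le_trans hJ' hx.1))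
    simp [hxx]
  · have h1 := aux_inSJ_mem h hx
    have h2 := aux_inSJ_fix h hx'
    rw [h2]
    rcases not_and_or.mp hx' with hl | hr
    · have hlt : x' < J.1 := lt_of_not_ge hl
      constructor <;> intro hh <;> exfalso
      · exact absurd (lt_of_lt_of_le hlt h1.1) (not_lt.mpr (le_of_lt hh))
      · exact absurd (lt_of_lt_of_le hlt hx.1) (not_lt.mpr (le_of_lt hh))
    · have hlt : J.2 < x' := lt_of_not_ge hr
      constructor <;> intro _
      · exact lt_of_le_of_lt hx.2 hlt
      · exact lt_of_le_of_lt h1.2 hlt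
  · have h1 := aux_inSJ_mem h hx'
    have h2 := aux_inSJ_fix h hx
    rw [h2]
    rcases not_and_or.mp hx with hl | hr
    · have hlt : x < J.1 := lt_of_not_ge hl
      constructor <;> intro _
      · exact lt_of_lt_of_le hlt hx'.1
      · exact lt_of_lt_of_le hlt h1.1
    · have hlt : J.2 < x := lt_of_not_ge hr
      constructor <;> intro hh <;> exfalso
      · exact absurd (lt_of_le_of_lt h1.2 hlt) (not_lt.mpr (le_of_lt hh))
      · exact absurd (lt_of_le_of_lt hx'.2 hlt) (not_lt.mpr (le_of_lt hh))
  · rw [aux_inSJ_fix h hx, aux_inSJ_fix h hx']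

lemma aux_posAt_succ {n m : ℕ} (vs : Fin m → Perm (Fin n)) (k : ℕ) (hk : k < m) :
    posAt vs (k + 1) = vs ⟨k, hk⟩ * posAt vs k := by
  unfold posAt
  rw [List.take_succ]
  have hg : (List.ofFn vs)[k]? = some (vs ⟨k, hk⟩) := by
    rw [List.getElem?_eq_getElem (by simpa using hk)]
    simp
  rw [hg]
  simp

lemma aux_typeOf_split {n m : ℕ} (vs : Fin m → Perm (Fin n)) (k : ℕ) :
    typeOf vs = ((List.ofFn vs).drop k).reverse.prod * posAt vs k := by
  unfold typeOf posAt
  rw [List.take_of_length_le (by simp)]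
  conv_lhs => rw [← List.take_append_drop k (List.ofFn vs)]
  rw [List.reverse_append, List.prod_append]

lemma aux_take_zetaSwap {n m : ℕ} (vs : Fin m → Perm (Fin n)) (p : Fin m) (i i' : Fin n)
    (q : ℕ) (hq : q ≤ p.1) :
    (List.ofFn (zetaSwap vs p i i')).take q = (List.ofFn vs).take q := by
  apply List.ext_getElem (by simp)
  intro l h1 h2
  simp only [List.getElem_take, List.getElem_ofFn]
  show zetaSwap vs p i i' _ = vs _
  unfold zetaSwap
  rw [if_neg]
  intro hc
  have : l = p.1 := by
    have := congrArg Fin.val hc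
    simpa using this
  have hl : l < q ∧ l < m := by simpa using h1
  omega

lemma aux_drop_zetaSwap {n m : ℕ} (vs : Fin m → Perm (Fin n)) (p : Fin m) (i i' : Fin n) :
    (List.ofFn (zetaSwap vs p i i')).drop (p.1 + 1) = (List.ofFn vs).drop (p.1 + 1) := by
  apply List.ext_getElem (by simp)
  intro l h1 h2
  simp only [List.getElem_drop, List.getElem_ofFn]
  show zetaSwap vs p i i' _ = vs _
  unfold zetaSwap
  rw [if_neg]
  intro hc
  have := congrArg Fin.val hc
  simp at this
  omega

lemma aux_posAt_zetaSwap {n m : ℕ} (vs : Fin m → Perm (Fin n)) (p : Fin m) (i i' : Fin n)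
    (q : ℕ) (hq : q ≤ p.1) :
    posAt (zetaSwap vs p i i') q = posAt vs q := by
  unfold posAt
  rw [aux_take_zetaSwap vs p i i' q hq]

lemma aux_typeOf_zetaSwap {n m : ℕ} (vs : Fin m → Perm (Fin n)) (p : Fin m) (a b : Fin n) :
    typeOf (zetaSwap vs p a b) =
      Equiv.swap (typeOf vs a) (typeOf vs b) * typeOf vs := by
  set vs' := zetaSwap vs p a b with hvs'
  set A := posAt vs (p.1 + 1) a with hA
  set B := posAt vs (p.1 + 1) b with hB
  have hpos : posAt vs' p.1 = posAt vs p.1 := aux_posAt_zetaSwap vs p a b p.1 le_rfl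
  have hvp : vs' p = Equiv.swap A B * vs p := by
    simp [hvs', zetaSwap, hA, hB]
  have h1 : posAt vs' (p.1 + 1) = Equiv.swap A B * posAt vs (p.1 + 1) := by
    rw [aux_posAt_succ vs' p.1 p.2, aux_posAt_succ vs p.1 p.2, hpos]
    rw [show (⟨p.1, p.2⟩ : Fin m) = p from rfl, hvp, mul_assoc]
  set S := ((List.ofFn vs).drop (p.1 + 1)).reverse.prod with hS
  have hS' : ((List.ofFn vs').drop (p.1 + 1)).reverse.prod = S := by
    rw [hS, hvs', aux_drop_zetaSwap]
  have h2 : typeOf vs' = S * posAt vs' (p.1 + 1) := by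
    rw [aux_typeOf_split vs' (p.1 + 1), hS']
  have h3 : typeOf vs = S * posAt vs (p.1 + 1) := aux_typeOf_split vs (p.1 + 1)
  have hta : typeOf vs a = S A := by rw [h3]; rfl
  have htb : typeOf vs b = S B := by rw [h3]; rfl
  rw [h2, h1, ← mul_assoc, Equiv.mul_swap_eq_swap_mul, mul_assoc, ← h3, hta, htb]

lemma aux_len_succ {n : ℕ} (k : ℕ) (hk : k + 1 < n) (y : Perm (Fin n))
    (hlt : y⁻¹ ⟨k, by omega⟩ < y⁻¹ ⟨k + 1, hk⟩) :
    len (swp k hk * y) = len y + 1 := by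
  set kf : Fin n := ⟨k, by omega⟩ with hkf
  set k1 : Fin n := ⟨k + 1, hk⟩ with hk1
  set i0 := y⁻¹ kf with hi0
  set j0 := y⁻¹ k1 with hj0
  have hyi0 : y i0 = kf := y.apply_symm_apply kf
  have hyj0 : y j0 = k1 := y.apply_symm_apply k1
  have hkfk1 : kf ≠ k1 := by
    intro h; have := congrArg Fin.val h; simp [hkf, hk1] at this
  have hswap : swp k hk = Equiv.swap kf k1 := rfl
  have hswapkf : swp k hk kf = k1 := by rw [hswap]; exact Equiv.swap_apply_left _ _
  have hswapk1 : swp k hk k1 = kf := by rw [hswap]; exact Equiv.swap_apply_right _ _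
  have hv : ∀ z : Fin n, ((swp k hk z : Fin n) : ℕ) =
      if (z : ℕ) = k then k + 1 else if (z : ℕ) = k + 1 then k else (z : ℕ) := by
    intro z
    rcases eq_or_ne z kf with rfl | h1
    · rw [hswapkf]; simp [hkf, hk1]
    rcases eq_or_ne z k1 with rfl | h2
    · have : (k1 : ℕ) ≠ k := by simp [hk1]
      rw [hswapk1]; simp [hk1, hkf, this]
    · have e1 : (z : ℕ) ≠ k := fun h => h1 (Fin.ext h)
      have e2 : (z : ℕ) ≠ k + 1 := fun h => h2 (Fin.ext h)
      rw [hswap, Equiv.swap_apply_of_ne_of_ne h1 h2]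
      simp [e1, e2]
  have key : ∀ c d : Fin n, ¬(c = kf ∧ d = k1) → ¬(c = k1 ∧ d = kf) →
      (swp k hk d < swp k hk c ↔ d < c) := by
    intro c d h1 h2
    rw [Fin.lt_def, Fin.lt_def, hv c, hv d]
    rw [not_and_or] at h1 h2
    have e1 : ¬(c = kf) ∨ ¬((d : ℕ) = k + 1) := by
      rcases h1 with h | h
      · exact Or.inl h
      · exact Or.inr (fun hh => h (Fin.ext hh))
    have q1 : ¬((c : ℕ) = k ∧ (d : ℕ) = k + 1) := by
      rintro ⟨hc, hd⟩
      rcases e1 with h | h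
      · exact h (Fin.ext hc)
      · exact h hd
    have q2 : ¬((c : ℕ) = k + 1 ∧ (d : ℕ) = k) := by
      rintro ⟨hc, hd⟩
      rcases h2 with h | h
      · exact h (Fin.ext hc)
      · exact h (Fin.ext hd)
    split_ifs <;> omega
  have hij : i0 < j0 := hlt
  have hij' : i0 ≠ j0 := ne_of_lt hij
  have hprnot : (i0, j0) ∉ (univ : Finset (Fin n × Fin n)).filter
      (fun x => x.1 < x.2 ∧ y x.2 < y x.1) := by
    simp only [mem_filter, mem_univ, true_and, not_and]
    intro _
    rw [hyi0, hyj0, Fin.lt_def]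
    simp [hkf, hk1]
  have hset : (univ : Finset (Fin n × Fin n)).filter
        (fun x => x.1 < x.2 ∧ (swp k hk * y) x.2 < (swp k hk * y) x.1)
      = insert (i0, j0) ((univ : Finset (Fin n × Fin n)).filter
        (fun x => x.1 < x.2 ∧ y x.2 < y x.1)) := by
    ext x
    obtain ⟨x1, x2⟩ := x
    rw [mem_filter, mem_insert, mem_filter]
    simp only [mem_filter, mem_univ, true_and, mem_insert, Equiv.Perm.mul_apply]
    by_cases hc1 : y x1 = kf ∧ y x2 = k1
    · have hx1 : x1 = i0 := by rw [hi0, ← hc1.1]; simp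
      have hx2 : x2 = j0 := by rw [hj0, ← hc1.2]; simp
      have hkl : kf < k1 := by rw [Fin.lt_def]; simp [hkf, hk1]
      subst hx1; subst hx2
      simp [hyi0, hyj0, hswapkf, hswapk1, hij, hkl]
    · by_cases hc2 : y x1 = k1 ∧ y x2 = kf
      · have hx1 : x1 = j0 := by rw [hj0, ← hc2.1]; simp
        have hx2 : x2 = i0 := by rw [hi0, ← hc2.2]; simp
        subst hx1; subst hx2
        have hne : ¬ j0 < i0 := not_lt.mpr (le_of_lt hij)
        simp [hne, Ne.symm hij', Prod.ext_iff, hij']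
      · have hkey := key (y x1) (y x2) hc1 hc2
        have hxne : ¬ ((x1, x2) : Fin n × Fin n) = (i0, j0) := by
          rw [Prod.mk.injEq]
          rintro ⟨rfl, rfl⟩
          exact hc1 ⟨hyi0, hyj0⟩
        simp only [hxne, false_or]
        exact and_congr_right (fun _ => hkey)
  unfold len
  rw [hset, card_insert_of_notMem hprnot]

lemma aux_len_step {n : ℕ} (k : ℕ) (hk : k + 1 < n) (y : Perm (Fin n)) :
    len (swp k hk * y) + 1 = len y ∨ len (swp k hk * y) = len y + 1 := by
  have hkn : k < n := by omega
  rcases lt_trichotomy (y⁻¹ ⟨k, hkn⟩) (y⁻¹ ⟨k + 1, hk⟩) with h | h | h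
  · right; exact aux_len_succ k hk y h
  · exfalso
    have := y⁻¹.injective h
    have := congrArg Fin.val this
    simp at this
  · left
    have hss : swp k hk * swp k hk = 1 := Equiv.swap_mul_self _ _
    have h2 : (swp k hk * y)⁻¹ ⟨k, hkn⟩ < (swp k hk * y)⁻¹ ⟨k + 1, hk⟩ := by
      have e1 : (swp k hk * y)⁻¹ (⟨k, hkn⟩ : Fin n) = y⁻¹ ⟨k + 1, hk⟩ := by
        rw [mul_inv_rev]
        simp only [Equiv.Perm.mul_apply]
        congr 1
        rw [show (swp k hk)⁻¹ = swp k hk from Equiv.swap_inv _ _]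
        exact Equiv.swap_apply_left _ _
      have e2 : (swp k hk * y)⁻¹ (⟨k + 1, hk⟩ : Fin n) = y⁻¹ ⟨k, hkn⟩ := by
        rw [mul_inv_rev]
        simp only [Equiv.Perm.mul_apply]
        congr 1
        rw [show (swp k hk)⁻¹ = swp k hk from Equiv.swap_inv _ _]
        exact Equiv.swap_apply_right _ _
      rw [e1, e2]
      exact h
    have := aux_len_succ k hk (swp k hk * y) h2
    rw [← mul_assoc, hss, one_mul] at this
    omega

end AuxZeta

noncomputable section
open Equiv Finset
open scoped Classical

/-- Lemma 5.2 / `l:lengthdiff`.  Let `I` be an ordered set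
partition of `[n]` of type `λ`, `u = u(I)`, and let `W = δ(U) ∈ T_I(G)` with
`U = U(π,u,yu) ∈ U_I(G)` not be fixed by `ζ` (the data `Z` records the
choices `t, p, j, j'` made in the definition of `ζ`, and
`π̂ = zetaSwap vs Z.p (u Z.j) (u Z.j')` is the swapped family, so
`ζ(W) = δ(U(π̂,u,ŷu))`).  Then there is an adjacent-transposition generator
`s = s_k` of `S_λ` (i.e. `k` and `k+1` lie in a common block of `λ`) such
that `Û = U(π̂,u,ŷu)` with `ŷ = ys` (in the paper's product convention; as
functions `ŷ = s ∘ y`, i.e. `typeOf π̂ = u ∘ (s ∘ y) ∘ u⁻¹`); in particular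
`ℓ(ŷ) = ℓ(y) ± 1`. -/
theorem zeta_move_length_step
    {n m : ℕ} (Js : Fin m → Fin n × Fin n) (hJs : ∀ p, (Js p).1 ≤ (Js p).2)
    (lam : List ℕ) (hsum : lam.sum = n) (hpos : ∀ x ∈ lam, 0 < x)
    (hsort : lam.Pairwise (fun a b => b ≤ a))
    (u : Perm (Fin n))
    (hu : ∀ i j : Fin n, i < j →
      blockIdx lam (i : ℕ) = blockIdx lam (j : ℕ) → u i < u j)
    (vs : Fin m → Perm (Fin n)) (hvs : IsPathFamily Js vs)
    (y : Perm (Fin n)) (hy : inYoung lam y)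
    (hty : typeOf vs = u * y * u⁻¹)
    (Z : ZetaData Js lam u vs) :
    ∃ (k : ℕ) (hk : k + 1 < n),
      blockIdx lam k = blockIdx lam (k + 1) ∧
      typeOf (zetaSwap vs Z.p (u Z.j) (u Z.j')) = u * (swp k hk * y) * u⁻¹ ∧
      (len (swp k hk * y) + 1 = len y ∨ len (swp k hk * y) = len y + 1) := by
  obtain ⟨tc, p, j, j', htc, htcMax, hpMeet, hpMax, hne, hjcol, hjcol', hjcent, hjcent',
    hord, hmax⟩ := Z
  have huy : ∀ z : Fin n, typeOf vs (u z) = u (y z) := by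
    intro z
    rw [hty]
    simp [Equiv.Perm.mul_apply]
  have hbyj : blockIdx lam ((y j : Fin n) : ℕ) = tc := by rw [hy j]; exact hjcol
  have hbyj' : blockIdx lam ((y j' : Fin n) : ℕ) = tc := by rw [hy j']; exact hjcol'
  have hordu : u (y j) < u (y j') := by rw [← huy, ← huy]; exact hord
  have hyy : y j < y j' := by
    rcases lt_trichotomy (y j) (y j') with h | h | h
    · exact h
    · exfalso; rw [h] at hordu; exact lt_irrefl _ hordu
    · exact absurd (hu _ _ h (hbyj'.trans hbyj.symm)) (not_lt.mpr (le_of_lt hordu))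
  have horder : ∀ (i i' : Fin n), colOf lam u i = tc → colOf lam u i' = tc → i ≠ i' →
      ∀ q : ℕ, p.1 + 1 ≤ q → q ≤ m →
      (posAt vs q i < posAt vs q i' ↔ posAt vs (p.1 + 1) i < posAt vs (p.1 + 1) i') := by
    intro i i' hci hci' hii q
    induction q with
    | zero => intro h1 _; omega
    | succ q ih =>
      intro hq1 hq2
      rcases Nat.lt_or_ge (p.1 + 1) (q + 1) with hlt | hge
      · have hq : p.1 + 1 ≤ q := by omega
        have hqm : q < m := by omega
        have hnb : ¬ ((Js ⟨q, hqm⟩).1 < (Js ⟨q, hqm⟩).2 ∧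
            memJ (Js ⟨q, hqm⟩) (posAt vs q i) ∧ memJ (Js ⟨q, hqm⟩) (posAt vs q i')) := by
          rintro ⟨hJ, hm1, hm2⟩
          refine hpMax ⟨q, hqm⟩ ?_ ⟨i, i', hii, hci, hci', ⟨hJ, hm1⟩, ⟨hJ, hm2⟩⟩
          rw [Fin.lt_def]
          exact hq
        rw [aux_posAt_succ vs q hqm]
        simp only [Equiv.Perm.mul_apply]
        rw [aux_order_pres (hvs ⟨q, hqm⟩) (posAt vs q i) (posAt vs q i') hnb]
        exact ih hq (by omega)
      · have hq : q + 1 = p.1 + 1 := by omega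
        rw [hq]
  have hcolj : colOf lam u (u j) = tc := by simpa [colOf] using hjcol
  have hcolj' : colOf lam u (u j') = tc := by simpa [colOf] using hjcol'
  have hune : u j ≠ u j' := fun h => hne (u.injective h)
  have hp1m : p.1 + 1 ≤ m := p.2
  have hsucc : ((y j' : Fin n) : ℕ) = ((y j : Fin n) : ℕ) + 1 := by
    by_contra hcon
    have hyylt : ((y j : Fin n) : ℕ) < ((y j' : Fin n) : ℕ) := by
      rw [Fin.lt_def] at hyy; exact hyy
    have hlt : ((y j : Fin n) : ℕ) + 1 < ((y j' : Fin n) : ℕ) := by omega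
    set x : Fin n := ⟨((y j : Fin n) : ℕ) + 1, by have := (y j').isLt; omega⟩ with hx
    have hx1 : y j < x := by rw [Fin.lt_def]; simp [hx]
    have hx2 : x < y j' := by rw [Fin.lt_def]; simpa [hx] using hlt
    have hbx : blockIdx lam (x : ℕ) = tc := by
      have h1 := aux_blockIdx_mono lam (show ((y j : Fin n) : ℕ) ≤ (x : ℕ) by simp [hx])
      have h2 := aux_blockIdx_mono lam
        (show (x : ℕ) ≤ ((y j' : Fin n) : ℕ) by simp [hx]; omega)
      omega
    obtain ⟨k', hyk'⟩ : ∃ k', y k' = x := ⟨y⁻¹ x, y.apply_symm_apply x⟩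
    have hbk' : blockIdx lam (k' : ℕ) = tc := by
      have hh := hy k'
      rw [hyk'] at hh
      omega
    have hk'j : k' ≠ j := by
      intro h; rw [h] at hyk'; exact (ne_of_lt hx1) hyk'
    have hk'j' : k' ≠ j' := by
      intro h; rw [h] at hyk'; exact (ne_of_lt hx2) hyk'.symm
    have hcolk' : colOf lam u (u k') = tc := by simpa [colOf] using hbk'
    have htk' : typeOf vs (u k') = u x := by rw [huy, hyk']
    have htlt1 : typeOf vs (u j) < typeOf vs (u k') := by
      rw [huy j, huy k', hyk']
      exact hu _ _ hx1 (hbyj.trans hbx.symm)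
    have htlt2 : typeOf vs (u k') < typeOf vs (u j') := by
      rw [huy k', huy j', hyk']
      exact hu _ _ hx2 (hbx.trans hbyj'.symm)
    have hadj : u j ≠ u k' := fun h => hk'j (u.injective h).symm
    have hbdj : u k' ≠ u j' := fun h => hk'j' (u.injective h)
    have ho1 : posAt vs (p.1 + 1) (u j) < posAt vs (p.1 + 1) (u k') := by
      have h := horder (u j) (u k') hcolj hcolk' hadj m hp1m le_rfl
      exact h.mp htlt1
    have ho2 : posAt vs (p.1 + 1) (u k') < posAt vs (p.1 + 1) (u j') := by
      have h := horder (u k') (u j') hcolk' hcolj' hbdj m hp1m le_rfl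
      exact h.mp htlt2
    have hJlt := hjcent.1
    have hpa1 : memJ (Js p) (posAt vs (p.1 + 1) (u j)) := by
      rw [aux_posAt_succ vs p.1 p.2]
      exact aux_inSJ_mem (hvs p) hjcent.2
    have hpb1 : memJ (Js p) (posAt vs (p.1 + 1) (u j')) := by
      rw [aux_posAt_succ vs p.1 p.2]
      exact aux_inSJ_mem (hvs p) hjcent'.2
    have hpk'1 : memJ (Js p) (posAt vs (p.1 + 1) (u k')) := by
      constructor
      · exact le_of_lt (lt_of_le_of_lt hpa1.1 ho1)
      · exact le_of_lt (lt_of_lt_of_le ho2 hpb1.2)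
    have hpk'0 : memJ (Js p) (posAt vs p.1 (u k')) := by
      by_contra hcc
      have hfix : vs p (posAt vs p.1 (u k')) = posAt vs p.1 (u k') :=
        aux_inSJ_fix (hvs p) hcc
      have heq : posAt vs (p.1 + 1) (u k') = posAt vs p.1 (u k') := by
        rw [aux_posAt_succ vs p.1 p.2]
        exact hfix
      rw [heq] at hpk'1
      exact hcc hpk'1
    have hcentk' : centeredAt Js vs p (u k') := ⟨hJlt, hpk'0⟩
    rcases hmax k' j' hk'j' hbk' hjcol' hcentk' hjcent' htlt2 with h | ⟨_, hle⟩
    · exact lt_irrefl _ h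
    · exact absurd htlt1 (not_lt.mpr hle)
  refine ⟨((y j : Fin n) : ℕ), by rw [← hsucc]; exact (y j').isLt, ?_, ?_, ?_⟩
  · rw [show ((y j : Fin n) : ℕ) + 1 = ((y j' : Fin n) : ℕ) from hsucc.symm, hbyj, hbyj']
  · have hswp : ∀ hk : ((y j : Fin n) : ℕ) + 1 < n,
        swp ((y j : Fin n) : ℕ) hk = Equiv.swap (y j) (y j') := by
      intro hk
      unfold swp
      congr 1
      all_goals apply Fin.ext
      all_goals simp [hsucc]
    rw [aux_typeOf_zetaSwap vs p (u j) (u j'), huy, huy, hty, hswp _,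
      Equiv.swap_apply_apply]
    group
  · exact aux_len_step _ _ y

end
end
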